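/- arXiv:0812.1938 — 3 statements merged into one kernel-verified Lean document; each statement's English description precedes it below -/
import Mathlib

section
/- (Trek separation for undirected graphs.) Let $G$ be an undirected graph on $[m]$ and let $\Sigma$ range over positive definite matrices with $(\Sigma^{-1})_{ij} = 0$ whenever $i \ne j$ and $i - j \notin E(G)$. For $A, B \subseteq [m]$ (not necessarily disjoint), $\mathrm{rank}\,\Sigma_{A,B} \le r$ for all such $\Sigma$ if and only if there exists $C \subseteq V(G)$ with $\#C \le r$ such that every path in $G$ from a vertex of $A$ to a vertex of $B$ passes through $C$. Moreover the generic rank of $\Sigma_{A,B}$ equals the minimum size of such a separating set $C$. -/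
set_option linter.unusedSectionVars false
set_option maxHeartbeats 1000000

open Matrix

def IsPath {V : Type*} (E : V → V → Prop) (p : List V) (i j : V) : Prop :=
  p.head? = some i ∧ p.getLast? = some j ∧ p.Chain' E

def VSep {V : Type*} (E : V → V → Prop) (A B C : Finset V) : Prop :=
  ∀ p : List V, ∀ a ∈ A, ∀ b ∈ B, IsPath E p a b → ∃ v ∈ C, v ∈ p

section PathLemmas

variable {V : Type*} {E : V → V → Prop} {p q : List V} {a b c x y : V}

theorem isPath_singleton (E : V → V → Prop) (a : V) : IsPath E [a] a a :=
  ⟨rfl, rfl, List.isChain_singleton a⟩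

theorem IsPath.ne_nil (h : IsPath E p a b) : p ≠ [] := by
  rintro rfl; simp [IsPath] at h

theorem IsPath.head_mem (h : IsPath E p a b) : a ∈ p := by
  have := h.1; cases p with
  | nil => simp at this
  | cons z t => simp only [List.head?_cons, Option.some.injEq] at this; subst this; simp

theorem IsPath.last_mem (h : IsPath E p a b) : b ∈ p := by
  obtain ⟨hnil, hb⟩ := List.mem_getLast?_eq_getLast (l := p) (x := b) h.2.1
  exact hb ▸ List.getLast_mem _

theorem IsPath.mono {E' : V → V → Prop} (hE : ∀ u v, E u v → E' u v)
    (h : IsPath E p a b) : IsPath E' p a b :=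
  ⟨h.1, h.2.1, h.2.2.imp (fun {u v} hu => hE u v hu)⟩

theorem IsPath.reverse (h : IsPath E p a b) :
    IsPath (fun u v => E v u) p.reverse b a := by
  refine ⟨?_, ?_, ?_⟩
  · rw [List.head?_reverse]; exact h.2.1
  · rw [List.getLast?_reverse]; exact h.1
  · simp only [List.Chain']; rw [List.isChain_reverse]; exact h.2.2

theorem isPath_reverse_iff :
    IsPath (fun u v => E v u) p.reverse b a ↔ IsPath E p a b := by
  constructor
  · intro h
    have := h.reverse
    simpa using this
  · exact IsPath.reverse

theorem IsPath.reverse_flip {E : V → V → Prop} {p : List V} {a b : V}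
    (h : IsPath (fun u v => E v u) p a b) : IsPath E p.reverse b a :=
  h.reverse

/-- concatenation along an edge -/
theorem IsPath.join (h₁ : IsPath E p a x) (he : E x y) (h₂ : IsPath E q y b) :
    IsPath E (p ++ q) a b := by
  refine ⟨?_, ?_, ?_⟩
  · rw [List.head?_append_of_ne_nil]
    · exact h₁.1
    · exact h₁.ne_nil
  · rw [List.getLast?_append, h₂.2.1]; rfl
  · simp only [List.Chain']; rw [List.isChain_append]
    refine ⟨h₁.2.2, h₂.2.2, ?_⟩
    intro u hu v hv
    rw [h₁.2.1] at hu; rw [h₂.1] at hv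
    simp only [Option.mem_def, Option.some.injEq] at hu hv
    subst hu; subst hv; exact he

/-- concatenation at a shared endpoint -/
theorem IsPath.trans (h₁ : IsPath E p a c) (h₂ : IsPath E q c b) :
    IsPath E (p ++ q.tail) a b := by
  obtain ⟨q₀, t, rfl⟩ : ∃ q₀ t, q = q₀ :: t := by
    cases q with
    | nil => exact absurd h₂.1 (by simp)
    | cons q₀ t => exact ⟨q₀, t, rfl⟩
  have hq₀ : q₀ = c := by simpa using h₂.1
  rw [hq₀] at h₂ ⊢
  simp only [List.tail_cons]
  cases t with
  | nil =>
    have hb : c = b := by simpa using h₂.2.1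
    subst hb; simpa using h₁
  | cons w t' =>
    have hpath : IsPath E (w :: t') w b := by
      refine ⟨rfl, ?_, (List.isChain_cons.1 h₂.2.2).2⟩
      have := h₂.2.1
      rwa [List.getLast?_cons_cons] at this
    exact h₁.join ((List.isChain_cons.1 h₂.2.2).1 w rfl) hpath

theorem IsPath.append_single (h : IsPath E p a x) (he : E x y) :
    IsPath E (p ++ [y]) a y :=
  h.join he (isPath_singleton E y)

/-- first hit of a set `D` along a path: a literal prefix ending at the first
vertex of `D`. -/
theorem first_hit (D : Finset V) (h : IsPath E p a b) (hD : ∃ v ∈ p, v ∈ D) :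
    ∃ q c r, IsPath E q a c ∧ c ∈ D ∧ p = q ++ r ∧
      ∃ q', q = q' ++ [c] ∧ ∀ v ∈ q', v ∉ D := by
  classical
  induction p generalizing a with
  | nil => exact absurd h.1 (by simp)
  | cons z t ih =>
    have hz : z = a := by simpa using h.1
    subst hz
    by_cases hzD : z ∈ D
    · exact ⟨[z], z, t, isPath_singleton E z, hzD, rfl, [], rfl, by simp⟩
    · have ht : ∃ v ∈ t, v ∈ D := by
        obtain ⟨v, hv, hvD⟩ := hD
        rcases List.mem_cons.1 hv with rfl | hv
        · exact absurd hvD hzD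
        · exact ⟨v, hv, hvD⟩
      obtain ⟨w, t', rfl⟩ : ∃ w t', t = w :: t' := by
        cases t with
        | nil => simp at ht
        | cons w t' => exact ⟨w, t', rfl⟩
      have hpath : IsPath E (w :: t') w b := by
        refine ⟨rfl, ?_, (List.isChain_cons.1 h.2.2).2⟩
        have := h.2.1
        rwa [List.getLast?_cons_cons] at this
      obtain ⟨q, c, r, hq, hcD, hqr, q', hq', hq'D⟩ := ih hpath ht
      refine ⟨z :: q, c, r, ?_, hcD, by rw [List.cons_append, ← hqr], z :: q', by
        rw [hq', List.cons_append], ?_⟩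
      · refine ⟨rfl, ?_, ?_⟩
        · rw [List.getLast?_cons, hq.2.1]; simp
        · simp only [List.Chain']; rw [List.isChain_cons]
          refine ⟨?_, hq.2.2⟩
          intro u hu
          rw [hq.1] at hu
          simp only [Option.mem_def, Option.some.injEq] at hu; subst hu
          exact (List.isChain_cons.1 h.2.2).1 w rfl
      · intro v hv
        rcases List.mem_cons.1 hv with rfl | hv
        · exact hzD
        · exact hq'D v hv

/-- loop erasure: every path contains a duplicate-free path with the same
endpoints and vertices among those of the original. -/
theorem loop_erase (h : IsPath E p a b) :
    ∃ q, IsPath E q a b ∧ q.Nodup ∧ ∀ v ∈ q, v ∈ p := by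
  classical
  suffices H : ∀ (n : ℕ) (p : List V) (a : V), p.length ≤ n → IsPath E p a b →
      ∃ q, IsPath E q a b ∧ q.Nodup ∧ ∀ v ∈ q, v ∈ p from H p.length p a le_rfl h
  intro n
  induction n with
  | zero => intro p a hlen h; exact absurd h.1 (by rw [List.length_eq_zero_iff.1 (Nat.le_zero.1 hlen)]; simp)
  | succ n ih =>
  intro p a hlen h
  obtain ⟨z, t, rfl⟩ : ∃ z t, p = z :: t := by
    cases p with
    | nil => exact absurd h.1 (by simp)
    | cons z t => exact ⟨z, t, rfl⟩
  have hz : z = a := by simpa using h.1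
  subst hz
  by_cases hmem : z ∈ t
  · -- cut the loop: take the suffix starting at the first occurrence of z in t
    obtain ⟨t₁, t₂, rfl⟩ := List.append_of_mem hmem
    have hsuffix : IsPath E (z :: t₂) z b := by
      refine ⟨rfl, ?_, ?_⟩
      · have := h.2.1
        rw [show z :: (t₁ ++ z :: t₂) = (z :: t₁) ++ (z :: t₂) by simp,
          List.getLast?_append] at this
        cases hgl : (z :: t₂).getLast? with
        | none => simp at hgl
        | some u => rw [hgl] at this; simpa using this
      · have := h.2.2
        rw [show z :: (t₁ ++ z :: t₂) = (z :: t₁) ++ (z :: t₂) by simp,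
          ] at this; simp only [List.Chain'] at this; rw [List.isChain_append] at this
        exact this.2.1
    have hlen2 : (z :: t₂).length ≤ n := by
      simp only [List.length_cons, List.length_append] at hlen ⊢; omega
    obtain ⟨q, hq, hnd, hsub⟩ := ih _ _ hlen2 hsuffix
    exact ⟨q, hq, hnd, fun v hv => by
      have := hsub v hv
      rcases List.mem_cons.1 this with rfl | hv'
      · simp
      · simp [hv']⟩
  · cases t with
    | nil =>
      have hb : z = b := by simpa using h.2.1
      subst hb
      exact ⟨[z], h, by simp, by simp⟩
    | cons w t' =>
      have hpath : IsPath E (w :: t') w b := by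
        refine ⟨rfl, ?_, (List.isChain_cons.1 h.2.2).2⟩
        have := h.2.1
        rwa [List.getLast?_cons_cons] at this
      have hlen2 : (w :: t').length ≤ n := by
        simp only [List.length_cons] at hlen ⊢; omega
      obtain ⟨q, hq, hnd, hsub⟩ := ih _ _ hlen2 hpath
      refine ⟨z :: q, ?_, ?_, ?_⟩
      · refine ⟨rfl, ?_, ?_⟩
        · rw [List.getLast?_cons, hq.2.1]; simp
        · simp only [List.Chain']; rw [List.isChain_cons]
          refine ⟨?_, hq.2.2⟩
          intro u hu
          rw [hq.1] at hu
          simp only [Option.mem_def, Option.some.injEq] at hu; subst hu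
          exact (List.isChain_cons.1 h.2.2).1 w rfl
      · exact List.nodup_cons.2 ⟨fun hzq => hmem (hsub z hzq), hnd⟩
      · intro v hv
        rcases List.mem_cons.1 hv with rfl | hv
        · simp
        · simp [hsub v hv]

/-- if a relation holds on consecutive pairs and can only fail at a pair whose
first element is not among the non-final vertices, we can restrict the chain -/
theorem chain'_strengthen {E' : V → V → Prop}
    (h : p.Chain' E) (hd : ∀ u v, E u v → u ∈ p.dropLast → E' u v) : p.Chain' E' := by
  induction p with
  | nil => exact List.isChain_nil
  | cons z t ih =>
    cases t with
    | nil => exact List.isChain_singleton z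
    | cons w t' =>
      simp only [List.Chain'] at h ⊢; rw [List.isChain_cons_cons] at h ⊢
      refine ⟨hd z w h.1 (by simp), ih h.2 ?_⟩
      intro u v huv hu
      refine hd u v huv ?_
      rw [List.dropLast_cons_of_ne_nil (by simp)]
      exact List.mem_cons_of_mem z hu

/-- if a chain fails for a subrelation, the offending pair appears consecutively -/
theorem chain'_or_mem {E' : V → V → Prop} (hxy : ∀ u v, E u v → ¬ E' u v → u = x ∧ v = y)
    (h : p.Chain' E) : p.Chain' E' ∨ (x ∈ p ∧ y ∈ p) := by
  induction p with
  | nil => exact Or.inl List.isChain_nil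
  | cons z t ih =>
    cases t with
    | nil => exact Or.inl (List.isChain_singleton z)
    | cons w t' =>
      simp only [List.Chain'] at h; rw [List.isChain_cons_cons] at h
      by_cases hzw : E' z w
      · rcases ih h.2 with h' | ⟨hx, hy⟩
        · exact Or.inl (List.isChain_cons_cons.2 ⟨hzw, h'⟩)
        · exact Or.inr ⟨List.mem_cons_of_mem z hx, List.mem_cons_of_mem z hy⟩
      · obtain ⟨rfl, rfl⟩ := hxy z w h.1 hzw
        exact Or.inr ⟨by simp, by simp⟩

end PathLemmas

section Menger

variable {V : Type*} [Fintype V] [DecidableEq V]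

/-- The set of cardinalities of separators. -/
def cutSet (E : V → V → Prop) (A B : Finset V) : Set ℕ :=
  {n | ∃ C : Finset V, VSep E A B C ∧ C.card = n}

theorem cutSet_nonempty (E : V → V → Prop) (A B : Finset V) :
    (cutSet E A B).Nonempty :=
  ⟨Finset.univ.card, Finset.univ,
    fun _p a _ha _b _hb hp => ⟨a, Finset.mem_univ a, hp.head_mem⟩, rfl⟩

/-- minimum size of a separator -/
noncomputable def mincut (E : V → V → Prop) (A B : Finset V) : ℕ :=
  sInf (cutSet E A B)

theorem mincut_le {E : V → V → Prop} {A B C : Finset V} (h : VSep E A B C) :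
    mincut E A B ≤ C.card :=
  Nat.sInf_le ⟨C, h, rfl⟩

theorem exists_mincut (E : V → V → Prop) (A B : Finset V) :
    ∃ C : Finset V, VSep E A B C ∧ C.card = mincut E A B :=
  Nat.sInf_mem (cutSet_nonempty E A B)

/-- the finset of (directed) edges -/
noncomputable def edges (E : V → V → Prop) : Finset (V × V) :=
  (Set.toFinite {p : V × V | E p.1 p.2}).toFinset

theorem mem_edges {E : V → V → Prop} {u v : V} :
    (u, v) ∈ edges E ↔ E u v := by
  simp [edges]

theorem concat_eq_append_cons {u' u r : List V} {c : V}
    (h : u' ++ [c] = u ++ c :: r) (hc : c ∉ u') : u = u' ∧ r = [] := by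
  induction u' generalizing u with
  | nil =>
    cases u with
    | nil => simpa using h.symm
    | cons a u₂ =>
      have := congrArg List.length h
      simp at this
  | cons a u₂ ih =>
    cases u with
    | nil =>
      simp only [List.cons_append, List.nil_append, List.cons.injEq] at h
      exact absurd (h.1 ▸ List.mem_cons_self) hc
    | cons a₂ u₃ =>
      simp only [List.cons_append, List.cons.injEq] at h
      obtain ⟨rfl, h2⟩ := h
      have := ih h2 (fun hmem => hc (List.mem_cons_of_mem _ hmem))
      exact ⟨by rw [this.1], this.2⟩

theorem menger_noedge (E : V → V → Prop) (hE : ∀ u v, ¬ E u v) (A B : Finset V) :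
    ∃ P : Fin (mincut E A B) → List V,
      (∀ i, ∃ a ∈ A, ∃ b ∈ B, IsPath E (P i) a b) ∧
      (∀ i j, i ≠ j → ∀ v, v ∈ P i → v ∉ P j) := by
  have hpath : ∀ (p : List V) (a b : V), IsPath E p a b → p = [a] ∧ a = b := by
    intro p a b hp
    obtain ⟨z, t, rfl⟩ : ∃ z t, p = z :: t := by
      cases p with
      | nil => exact absurd hp.1 (by simp)
      | cons z t => exact ⟨z, t, rfl⟩
    have hz : z = a := by simpa using hp.1
    subst hz
    cases t with
    | nil => exact ⟨rfl, by simpa using hp.2.1⟩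
    | cons w t' => exact absurd ((List.isChain_cons.1 hp.2.2).1 w rfl) (hE z w)
  have hsep : VSep E A B (A ∩ B) := by
    intro p a ha b hb hp
    obtain ⟨rfl, rfl⟩ := hpath p a b hp
    exact ⟨a, Finset.mem_inter.2 ⟨ha, hb⟩, by simp⟩
  have hcard : mincut E A B = (A ∩ B).card := by
    refine le_antisymm (mincut_le hsep) ?_
    obtain ⟨C, hC, hCcard⟩ := exists_mincut E A B
    rw [← hCcard]
    refine Finset.card_le_card ?_
    intro v hv
    obtain ⟨w, hwC, hwp⟩ := hC [v] v (Finset.mem_inter.1 hv).1 v (Finset.mem_inter.1 hv).2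
      (isPath_singleton E v)
    rcases List.mem_singleton.1 hwp with rfl
    exact hwC
  have e : Fin (mincut E A B) ≃ {x // x ∈ A ∩ B} :=
    (Finset.equivFinOfCardEq hcard.symm).symm
  refine ⟨fun i => [(e i).1], ?_, ?_⟩
  · intro i
    have h := (e i).2
    exact ⟨(e i).1, (Finset.mem_inter.1 h).1, (e i).1, (Finset.mem_inter.1 h).2,
      isPath_singleton E _⟩
  · intro i j hij v hvi hvj
    rcases List.mem_singleton.1 hvi with rfl
    rcases List.mem_singleton.1 hvj with h
    exact hij (e.injective (Subtype.ext h))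

/-- Menger's theorem, induction form -/
theorem menger_aux : ∀ (n : ℕ) (E : V → V → Prop), (∀ v, ¬ E v v) →
    (edges E).card ≤ n → ∀ A B : Finset V,
    ∃ P : Fin (mincut E A B) → List V,
      (∀ i, ∃ a ∈ A, ∃ b ∈ B, IsPath E (P i) a b) ∧
      (∀ i j, i ≠ j → ∀ v, v ∈ P i → v ∉ P j) := by
  intro n
  induction n with
  | zero =>
    intro E hirr hcard A B
    refine menger_noedge E ?_ A B
    intro u v huv
    have hmem : (u, v) ∈ edges E := mem_edges.2 huv
    have := Finset.card_pos.2 ⟨_, hmem⟩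
    omega
  | succ n ih =>
    intro E hirr hcard A B
    have hcastinj : ∀ {k l : ℕ} (h : k ≤ l) (a b : Fin k),
        Fin.castLE h a = Fin.castLE h b → a = b := by
      intro k l h a b hab
      have := congrArg Fin.val hab
      simp only [Fin.coe_castLE] at this
      exact Fin.ext this
    by_cases hne : edges E = ∅
    · refine menger_noedge E ?_ A B
      intro u v huv
      exact absurd (mem_edges.2 huv) (by simp [hne])
    · obtain ⟨⟨x, y⟩, hxyE⟩ := Finset.nonempty_iff_ne_empty.2 hne
      have hxy : E x y := mem_edges.1 hxyE
      have hxney : x ≠ y := by rintro rfl; exact hirr x hxy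
      set E' : V → V → Prop := fun u v => E u v ∧ ¬(u = x ∧ v = y) with hE'def
      have hE'E : ∀ u v, E' u v → E u v := fun u v h => h.1
      have hirr' : ∀ v, ¬ E' v v := fun v h => hirr v h.1
      have hedges' : edges E' = (edges E).erase (x, y) := by
        ext ⟨u, v⟩
        simp only [mem_edges, Finset.mem_erase, hE'def]
        constructor
        · rintro ⟨h1, h2⟩
          refine ⟨?_, h1⟩
          simp only [ne_eq, Prod.mk.injEq]; tauto
        · rintro ⟨h1, h2⟩
          refine ⟨h2, ?_⟩
          simp only [ne_eq, Prod.mk.injEq] at h1; tauto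
      have hcard' : (edges E').card ≤ n := by
        rw [hedges']
        have := Finset.card_erase_of_mem hxyE
        omega
      set s := mincut E A B with hs
      by_cases hsle : s ≤ mincut E' A B
      · obtain ⟨P, hP1, hP2⟩ := ih E' hirr' hcard' A B
        refine ⟨fun i => P (Fin.castLE hsle i), ?_, ?_⟩
        · intro i
          obtain ⟨a, ha, b, hb, hp⟩ := hP1 _
          exact ⟨a, ha, b, hb, hp.mono hE'E⟩
        · intro i j hij v hv
          exact hP2 _ _ (fun h => hij (hcastinj hsle _ _ h)) v hv
      · push_neg at hsle
        obtain ⟨C', hC'sep, hC'card⟩ := exists_mincut E' A B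
        have hC'lt : C'.card < s := by rw [hC'card]; exact hsle
        have hsepOr : ∀ (p : List V) (a b : V), IsPath E p a b →
            List.Chain' E' p ∨ (x ∈ p ∧ y ∈ p) := by
          intro p a b hp
          refine chain'_or_mem (x := x) (y := y) ?_ hp.2.2
          intro u v huv hne'
          by_contra hc
          exact hne' ⟨huv, fun h => hc h⟩
        have hCx : VSep E A B (insert x C') := by
          intro p a ha b hb hp
          rcases hsepOr p a b hp with hch | ⟨hxp, _⟩
          · obtain ⟨v, hvC, hvp⟩ := hC'sep p a ha b hb ⟨hp.1, hp.2.1, hch⟩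
            exact ⟨v, Finset.mem_insert_of_mem hvC, hvp⟩
          · exact ⟨x, Finset.mem_insert_self x C', hxp⟩
        have hCy : VSep E A B (insert y C') := by
          intro p a ha b hb hp
          rcases hsepOr p a b hp with hch | ⟨_, hyp⟩
          · obtain ⟨v, hvC, hvp⟩ := hC'sep p a ha b hb ⟨hp.1, hp.2.1, hch⟩
            exact ⟨v, Finset.mem_insert_of_mem hvC, hvp⟩
          · exact ⟨y, Finset.mem_insert_self y C', hyp⟩
        have hxC' : x ∉ C' := by
          intro hx
          have hsC : VSep E A B C' := by
            have := hCx
            rwa [Finset.insert_eq_self.2 hx] at this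
          have := mincut_le hsC
          omega
        have hyC' : y ∉ C' := by
          intro hy
          have hsC : VSep E A B C' := by
            have := hCy
            rwa [Finset.insert_eq_self.2 hy] at this
          have := mincut_le hsC
          omega
        have hCxcard : (insert x C').card = s := by
          have h1 : s ≤ (insert x C').card := mincut_le hCx
          have h2 : (insert x C').card ≤ C'.card + 1 := Finset.card_insert_le _ _
          omega
        have hCycard : (insert y C').card = s := by
          have h1 : s ≤ (insert y C').card := mincut_le hCy
          have h2 : (insert y C').card ≤ C'.card + 1 := Finset.card_insert_le _ _
          omega
        -- every separator of (E', A, insert x C') separates A, B in E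
        have hf3 : ∀ D : Finset V, VSep E' A (insert x C') D → VSep E A B D := by
          intro D hD p a ha b hb hp
          obtain ⟨v0, hv0C, hv0p⟩ := hCx p a ha b hb hp
          obtain ⟨q, c, r, hq, hcD, hpqr, q', hq', hq'D⟩ :=
            first_hit (insert x C') hp ⟨v0, hv0p, hv0C⟩
          have hch : List.Chain' E' q := by
            refine chain'_strengthen hq.2.2 ?_
            intro u v huv hu
            refine ⟨huv, ?_⟩
            rintro ⟨rfl, rfl⟩
            rw [hq', List.dropLast_concat] at hu
            exact hq'D u hu (Finset.mem_insert_self u C')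
          obtain ⟨w, hwD, hwq⟩ := hD q a ha c hcD ⟨hq.1, hq.2.1, hch⟩
          exact ⟨w, hwD, by rw [hpqr]; exact List.mem_append_left r hwq⟩
        have hf4 : ∀ D : Finset V,
            VSep (fun u v => E' v u) B (insert y C') D → VSep E A B D := by
          intro D hD p a ha b hb hp
          obtain ⟨v0, hv0C, hv0p⟩ := hCy p a ha b hb hp
          have hrev := hp.reverse
          obtain ⟨q, c, r, hq, hcD, hpqr, q', hq', hq'D⟩ :=
            first_hit (insert y C') hrev ⟨v0, by simpa using hv0p, hv0C⟩
          have hch : List.Chain' (fun u v => E' v u) q := by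
            refine chain'_strengthen hq.2.2 ?_
            intro u v huv hu
            refine ⟨huv, ?_⟩
            rintro ⟨rfl, rfl⟩
            rw [hq', List.dropLast_concat] at hu
            exact hq'D u hu (Finset.mem_insert_self u C')
          obtain ⟨w, hwD, hwq⟩ := hD q b hb c hcD ⟨hq.1, hq.2.1, hch⟩
          refine ⟨w, hwD, ?_⟩
          have hwrev : w ∈ p.reverse := by rw [hpqr]; exact List.mem_append_left r hwq
          simpa using hwrev
        have hminx : s ≤ mincut E' A (insert x C') := by
          obtain ⟨C0, hC0, hC0card⟩ := exists_mincut E' A (insert x C')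
          rw [← hC0card]
          exact mincut_le (hf3 C0 hC0)
        have hminy : s ≤ mincut (fun u v => E' v u) B (insert y C') := by
          obtain ⟨C0, hC0, hC0card⟩ := exists_mincut (fun u v => E' v u) B (insert y C')
          rw [← hC0card]
          exact mincut_le (hf4 C0 hC0)
        have hedgesflip : (edges (fun u v => E' v u)).card ≤ n := by
          have himg : edges (fun u v => E' v u) = (edges E').image (fun p => (p.2, p.1)) := by
            ext ⟨u, v⟩
            simp only [mem_edges, Finset.mem_image]
            constructor
            · intro h
              exact ⟨(v, u), mem_edges.2 h, rfl⟩
            · rintro ⟨⟨a, b⟩, hab, heq⟩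
              obtain ⟨rfl, rfl⟩ : b = u ∧ a = v := by
                simpa [Prod.ext_iff] using heq
              exact mem_edges.1 hab
          rw [himg]
          exact le_trans Finset.card_image_le hcard'
        obtain ⟨P0, hP0path, hP0disj⟩ := ih E' hirr' hcard' A (insert x C')
        obtain ⟨P1, hP1path, hP1disj⟩ :=
          ih (fun u v => E' v u) (fun v h => hirr' v h) hedgesflip B (insert y C')
        -- trim the A-side paths at their first hit of insert x C'
        have htrimA : ∀ i : Fin s, ∃ (q : List V) (a c : V) (q' : List V),
            a ∈ A ∧ c ∈ insert x C' ∧ IsPath E' q a c ∧ q = q' ++ [c] ∧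
            (∀ v ∈ q', v ∉ insert x C') ∧ (∀ v ∈ q, v ∈ P0 (Fin.castLE hminx i)) := by
          intro i
          obtain ⟨a, ha, c0, hc0, hp⟩ := hP0path (Fin.castLE hminx i)
          obtain ⟨q, c, r, hq, hcD, hpqr, q', hq', hq'D⟩ :=
            first_hit (insert x C') hp ⟨c0, hp.last_mem, hc0⟩
          exact ⟨q, a, c, q', ha, hcD, hq, hq', hq'D,
            fun v hv => by rw [hpqr]; exact List.mem_append_left r hv⟩
        choose Q qα qγ Q' hα hγ hQ hQeq hQ'notin hQsub using htrimA
        -- trim the B-side paths at their first hit of insert y C', then reverse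
        have htrimB : ∀ j : Fin s, ∃ (q : List V) (d b : V) (t : List V),
            b ∈ B ∧ d ∈ insert y C' ∧ IsPath E' q d b ∧ q = d :: t ∧
            (∀ v ∈ t, v ∉ insert y C') ∧ (∀ v ∈ q, v ∈ P1 (Fin.castLE hminy j)) := by
          intro j
          obtain ⟨b, hb, d0, hd0, hp⟩ := hP1path (Fin.castLE hminy j)
          obtain ⟨q, c, r, hq, hcD, hpqr, q', hq', hq'D⟩ :=
            first_hit (insert y C') hp ⟨d0, hp.last_mem, hd0⟩
          refine ⟨q.reverse, c, b, q'.reverse, hb, hcD, hq.reverse_flip, by rw [hq']; simp,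
            ?_, ?_⟩
          · intro v hv
            exact hq'D v (by simpa using hv)
          · intro v hv
            have hvq : v ∈ q := by simpa using hv
            rw [hpqr]
            exact List.mem_append_left r hvq
        choose R qδ qβ Rt hβ hδ hR hReq hRtnotin hRsub using htrimB
        have hγQ : ∀ i, qγ i ∈ Q i := fun i => by
          rw [hQeq i]; exact List.mem_append_right _ (by simp)
        have hδR : ∀ j, qδ j ∈ R j := fun j => by
          rw [hReq j]; exact List.mem_cons_self
        have hγinj : Function.Injective qγ := by
          intro i j hij
          by_contra hne'
          have hQij : Fin.castLE hminx i ≠ Fin.castLE hminx j :=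
            fun h => hne' (hcastinj hminx _ _ h)
          exact hP0disj _ _ hQij (qγ i) (hQsub i _ (hγQ i)) (hij ▸ hQsub j _ (hγQ j))
        have hδinj : Function.Injective qδ := by
          intro i j hij
          by_contra hne'
          have hRij : Fin.castLE hminy i ≠ Fin.castLE hminy j :=
            fun h => hne' (hcastinj hminy _ _ h)
          exact hP1disj _ _ hRij (qδ i) (hRsub i _ (hδR i)) (hij ▸ hRsub j _ (hδR j))
        have hγsurj : ∀ c ∈ insert x C', ∃ i, qγ i = c := by
          have himage : Finset.image qγ Finset.univ = insert x C' := by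
            apply Finset.eq_of_subset_of_card_le
            · intro c hc
              obtain ⟨i, _, rfl⟩ := Finset.mem_image.1 hc
              exact hγ i
            · rw [Finset.card_image_of_injective _ hγinj, Finset.card_univ,
                Fintype.card_fin, hCxcard]
          intro c hc
          rw [← himage] at hc
          obtain ⟨i, _, h⟩ := Finset.mem_image.1 hc
          exact ⟨i, h⟩
        have hδsurj : ∀ c ∈ insert y C', ∃ j, qδ j = c := by
          have himage : Finset.image qδ Finset.univ = insert y C' := by
            apply Finset.eq_of_subset_of_card_le
            · intro c hc
              obtain ⟨j, _, rfl⟩ := Finset.mem_image.1 hc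
              exact hδ j
            · rw [Finset.card_image_of_injective _ hδinj, Finset.card_univ,
                Fintype.card_fin, hCycard]
          intro c hc
          rw [← himage] at hc
          obtain ⟨j, _, h⟩ := Finset.mem_image.1 hc
          exact ⟨j, h⟩
        have hQunique : ∀ i v, v ∈ Q i → v ∈ insert x C' → v = qγ i := by
          intro i v hv hvC
          rw [hQeq i] at hv
          rcases List.mem_append.1 hv with h | h
          · exact absurd hvC (hQ'notin i v h)
          · simpa using h
        have hRunique : ∀ j v, v ∈ R j → v ∈ insert y C' → v = qδ j := by
          intro j v hv hvC
          rw [hReq j] at hv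
          rcases List.mem_cons.1 hv with h | h
          · exact h
          · exact absurd hvC (hRtnotin j v h)
        -- prefix of Q i up to v avoiding C'
        have hQprefix : ∀ (i : Fin s) (v : V), v ∈ Q i → v ∉ C' → v ≠ x →
            ∃ q, IsPath E' q (qα i) v ∧ ∀ w ∈ q, w ∉ C' := by
          intro i v hv hvC' hvx
          obtain ⟨q, c, r, hq, hcD, hpqr, q'', hq'', hq''D⟩ :=
            first_hit (insert v C') (hQ i) ⟨v, hv, Finset.mem_insert_self v C'⟩
          rcases Finset.mem_insert.1 hcD with rfl | hcC'
          · refine ⟨q, hq, ?_⟩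
            intro w hw hwC'
            rw [hq''] at hw
            rcases List.mem_append.1 hw with h | h
            · exact hq''D w h (Finset.mem_insert_of_mem hwC')
            · rcases List.mem_singleton.1 h with rfl
              exact hvC' hwC'
          · exfalso
            have hcQ : c ∈ Q i := by
              rw [hpqr]
              exact List.mem_append_left r (by rw [hq'']; exact List.mem_append_right _ (by simp))
            have hcx : c = qγ i := hQunique i c hcQ (Finset.mem_insert_of_mem hcC')
            have h1 : Q i = q'' ++ c :: r := by rw [hpqr, hq'']; simp
            have h2 : Q' i ++ [c] = Q i := by rw [hcx]; exact (hQeq i).symm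
            have hstruct : Q' i ++ [c] = q'' ++ c :: r := h2.trans h1
            have hcnot : c ∉ Q' i := fun hmem =>
              hQ'notin i c hmem (Finset.mem_insert_of_mem hcC')
            obtain ⟨hu, hr⟩ := concat_eq_append_cons hstruct hcnot
            -- now Q i = q'' ++ [c] with q'' avoiding v, so v = c ∈ C', contradiction
            have hvQi : v ∈ q'' ++ c :: r := by rw [← h1]; exact hv
            rcases List.mem_append.1 hvQi with h | h
            · exact hq''D v h (Finset.mem_insert_self v C')
            · rw [hr] at h
              rcases List.mem_singleton.1 h with rfl
              exact hvC' hcC'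
        -- suffix of R j from v to qβ j avoiding C'
        have hRsuffix : ∀ (j : Fin s) (v : V), v ∈ R j → v ∉ C' → v ≠ y →
            ∃ q, IsPath E' q v (qβ j) ∧ ∀ w ∈ q, w ∉ C' := by
          intro j v hv hvC' hvy
          have hrev := (hR j).reverse
          obtain ⟨q, c, r, hq, hcD, hpqr, q'', hq'', hq''D⟩ :=
            first_hit (insert v C') hrev ⟨v, by simpa using hv, Finset.mem_insert_self v C'⟩
          rcases Finset.mem_insert.1 hcD with rfl | hcC'
          · refine ⟨q.reverse, hq.reverse_flip, ?_⟩
            intro w hw hwC'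
            have hwq : w ∈ q := by simpa using hw
            rw [hq''] at hwq
            rcases List.mem_append.1 hwq with h | h
            · exact hq''D w h (Finset.mem_insert_of_mem hwC')
            · rcases List.mem_singleton.1 h with rfl
              exact hvC' hwC'
          · exfalso
            have hcR : c ∈ R j := by
              have : c ∈ (R j).reverse := by
                rw [hpqr]
                exact List.mem_append_left r (by rw [hq'']; exact List.mem_append_right _ (by simp))
              simpa using this
            have hcδ : c = qδ j := hRunique j c hcR (Finset.mem_insert_of_mem hcC')
            have h1 : (R j).reverse = q'' ++ c :: r := by rw [hpqr, hq'']; simp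
            have h2 : (Rt j).reverse ++ [c] = (R j).reverse := by rw [hcδ, hReq j]; simp
            have hstruct : (Rt j).reverse ++ [c] = q'' ++ c :: r := h2.trans h1
            have hcnot : c ∉ (Rt j).reverse := by
              intro hmem
              exact hRtnotin j c (by simpa using hmem) (Finset.mem_insert_of_mem hcC')
            obtain ⟨hu, hr⟩ := concat_eq_append_cons hstruct hcnot
            have hvrev : v ∈ q'' ++ c :: r := by
              rw [← h1]
              simpa using hv
            rcases List.mem_append.1 hvrev with h | h
            · exact hq''D v h (Finset.mem_insert_self v C')
            · rw [hr] at h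
              rcases List.mem_singleton.1 h with rfl
              exact hvC' hcC'
        -- claim: y does not lie on any A-side path
        have hynotinQ : ∀ i, y ∉ Q i := by
          intro i hyQ
          obtain ⟨q, hq, hqC'⟩ := hQprefix i y hyQ hyC' (Ne.symm hxney)
          obtain ⟨jy, hjy⟩ := hδsurj y (Finset.mem_insert_self y C')
          have hpath : IsPath E' (q ++ (R jy).tail) (qα i) (qβ jy) :=
            hq.trans (hjy ▸ hR jy)
          obtain ⟨w, hwC', hwmem⟩ := hC'sep _ (qα i) (hα i) (qβ jy) (hβ jy) hpath
          rcases List.mem_append.1 hwmem with h | h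
          · exact hqC' w h hwC'
          · have hwt : w ∈ Rt jy := by rw [hReq jy] at h; simpa using h
            exact hRtnotin jy w hwt (Finset.mem_insert_of_mem hwC')
        -- claim: x does not lie on any B-side path
        have hxnotinR : ∀ j, x ∉ R j := by
          intro j hxR
          obtain ⟨q, hq, hqC'⟩ := hRsuffix j x hxR hxC' hxney
          obtain ⟨ix, hix⟩ := hγsurj x (Finset.mem_insert_self x C')
          have hQx : ∀ v ∈ Q ix, v ∉ C' := by
            intro v hv hvC'
            have := hQunique ix v hv (Finset.mem_insert_of_mem hvC')
            rw [this, hix] at hvC'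
            exact hxC' hvC'
          have hpath : IsPath E' (Q ix ++ q.tail) (qα ix) (qβ j) :=
            (hix ▸ hQ ix).trans hq
          obtain ⟨w, hwC', hwmem⟩ := hC'sep _ _ (hα ix) _ (hβ j) hpath
          rcases List.mem_append.1 hwmem with h | h
          · exact hQx w h hwC'
          · exact hqC' w (List.mem_of_mem_tail h) hwC'
        -- claim: the only common vertices of A-side and B-side paths are in C'
        have hc3 : ∀ i j v, v ∈ Q i → v ∈ R j → v = qγ i ∧ v = qδ j ∧ v ∈ C' := by
          intro i j v hvQ hvR
          by_cases hvC' : v ∈ C'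
          · exact ⟨hQunique i v hvQ (Finset.mem_insert_of_mem hvC'),
              hRunique j v hvR (Finset.mem_insert_of_mem hvC'), hvC'⟩
          · exfalso
            have hvx : v ≠ x := fun h => hxnotinR j (h ▸ hvR)
            have hvy : v ≠ y := fun h => hynotinQ i (h ▸ hvQ)
            obtain ⟨q1, hq1, hq1C'⟩ := hQprefix i v hvQ hvC' hvx
            obtain ⟨q2, hq2, hq2C'⟩ := hRsuffix j v hvR hvC' hvy
            have hpath : IsPath E' (q1 ++ q2.tail) (qα i) (qβ j) := hq1.trans hq2
            obtain ⟨w, hwC', hwmem⟩ := hC'sep _ _ (hα i) _ (hβ j) hpath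
            rcases List.mem_append.1 hwmem with h | h
            · exact hq1C' w h hwC'
            · exact hq2C' w (List.mem_of_mem_tail h) hwC'
        -- gluing
        classical
        have hdmem : ∀ i : Fin s, (if qγ i ∈ C' then qγ i else y) ∈ insert y C' := by
          intro i
          by_cases h : qγ i ∈ C' <;> simp [h]
        have hjex : ∀ i : Fin s, ∃ j, qδ j = (if qγ i ∈ C' then qγ i else y) :=
          fun i => hδsurj _ (hdmem i)
        choose jfun hjfun using hjex
        have hγx : ∀ i, qγ i ∉ C' → qγ i = x := by
          intro i h
          rcases Finset.mem_insert.1 (hγ i) with h' | h'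
          · exact h'
          · exact absurd h' h
        have hdinj : ∀ i i' : Fin s,
            (if qγ i ∈ C' then qγ i else y) = (if qγ i' ∈ C' then qγ i' else y) → i = i' := by
          intro i i' h
          by_cases h1 : qγ i ∈ C' <;> by_cases h2 : qγ i' ∈ C' <;>
            simp only [h1, h2, if_true, if_false] at h
          · exact hγinj h
          · exact absurd (h ▸ h1) hyC'
          · exact absurd (h ▸ h2) (by rw [← h] at h2; exact absurd h2 hyC')
          · exact hγinj ((hγx i h1).trans (hγx i' h2).symm)
        have hjinj : Function.Injective jfun := by
          intro i i' h
          apply hdinj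
          rw [← hjfun i, ← hjfun i', h]
        refine ⟨fun i => Q i ++ (if qγ i ∈ C' then (R (jfun i)).tail else R (jfun i)), ?_, ?_⟩
        · intro i
          refine ⟨qα i, hα i, qβ (jfun i), hβ (jfun i), ?_⟩
          by_cases h : qγ i ∈ C'
          · simp only [h, if_true]
            have hδi : qδ (jfun i) = qγ i := by rw [hjfun i]; simp [h]
            have := ((hQ i).mono hE'E).trans ((hδi ▸ hR (jfun i)).mono hE'E)
            exact this
          · simp only [h, if_false]
            have hγix : qγ i = x := hγx i h
            have hδiy : qδ (jfun i) = y := by rw [hjfun i]; simp [h]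
            exact ((hγix ▸ hQ i).mono hE'E).join hxy ((hδiy ▸ hR (jfun i)).mono hE'E)
        · intro i i' hne' v hv hv'
          have hmem1 : v ∈ Q i ∨ v ∈ R (jfun i) := by
            rcases List.mem_append.1 hv with h | h
            · exact Or.inl h
            · right
              by_cases hc : qγ i ∈ C'
              · rw [if_pos hc] at h; exact List.mem_of_mem_tail h
              · rw [if_neg hc] at h; exact h
          have hmem2 : v ∈ Q i' ∨ v ∈ R (jfun i') := by
            rcases List.mem_append.1 hv' with h | h
            · exact Or.inl h
            · right
              by_cases hc : qγ i' ∈ C'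
              · rw [if_pos hc] at h; exact List.mem_of_mem_tail h
              · rw [if_neg hc] at h; exact h
          have hmixed : ∀ i₁ i₂ : Fin s, i₁ ≠ i₂ → v ∈ Q i₁ → v ∈ R (jfun i₂) → False := by
            intro i₁ i₂ hne₁₂ h1 h2
            obtain ⟨hv1, hv2, hvC'⟩ := hc3 i₁ (jfun i₂) v h1 h2
            have hd2 : qδ (jfun i₂) = (if qγ i₂ ∈ C' then qγ i₂ else y) := hjfun i₂
            by_cases hc : qγ i₂ ∈ C'
            · rw [hd2, if_pos hc] at hv2
              exact hne₁₂ (hγinj (hv1.symm.trans hv2))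
            · rw [hd2, if_neg hc] at hv2
              rw [hv2] at hvC'
              exact hyC' hvC'
          rcases hmem1 with h1 | h1 <;> rcases hmem2 with h2 | h2
          · have hQij : Fin.castLE hminx i ≠ Fin.castLE hminx i' :=
              fun h => hne' (hcastinj hminx _ _ h)
            exact hP0disj _ _ hQij v (hQsub i v h1) (hQsub i' v h2)
          · exact hmixed i i' hne' h1 h2
          · exact hmixed i' i (Ne.symm hne') h2 h1
          · have hRij : Fin.castLE hminy (jfun i) ≠ Fin.castLE hminy (jfun i') := by
              intro h
              exact hne' (hjinj (hcastinj hminy _ _ h))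
            exact hP1disj _ _ hRij v (hRsub (jfun i) v h1) (hRsub (jfun i') v h2)

theorem menger (E : V → V → Prop) (hirr : ∀ v, ¬ E v v) (A B : Finset V) :
    ∃ P : Fin (mincut E A B) → List V,
      (∀ i, ∃ a ∈ A, ∃ b ∈ B, IsPath E (P i) a b) ∧
      (∀ i j, i ≠ j → ∀ v, v ∈ P i → v ∉ P j) :=
  menger_aux (edges E).card E hirr le_rfl A B

end Menger
section PathMatrix

variable {V : Type*} [Fintype V] [DecidableEq V]

/-- the successor of `v` in the list `l` -/
def nextV : List V → V → Option V
  | [], _ => none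
  | [_], _ => none
  | x :: y :: t, v => if v = x then some y else nextV (y :: t) v

theorem nextV_mem {l : List V} {v w : V} (h : nextV l v = some w) : v ∈ l ∧ w ∈ l := by
  induction l with
  | nil => simp [nextV] at h
  | cons x t ih =>
    cases t with
    | nil => simp [nextV] at h
    | cons y t' =>
      rw [nextV] at h
      by_cases hv : v = x
      · rw [if_pos hv] at h
        subst hv
        obtain rfl : y = w := by simpa using h
        exact ⟨by simp, by simp⟩
      · rw [if_neg hv] at h
        obtain ⟨h1, h2⟩ := ih h
        exact ⟨List.mem_cons_of_mem _ h1, List.mem_cons_of_mem _ h2⟩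

theorem nextV_rel {F : V → V → Prop} {l : List V} {v w : V}
    (hc : l.Chain' F) (h : nextV l v = some w) : F v w := by
  induction l with
  | nil => simp [nextV] at h
  | cons x t ih =>
    cases t with
    | nil => simp [nextV] at h
    | cons y t' =>
      rw [nextV] at h
      by_cases hv : v = x
      · rw [if_pos hv] at h
        obtain rfl : y = w := by simpa using h
        subst hv
        exact (List.isChain_cons_cons.1 hc).1
      · rw [if_neg hv] at h
        exact ih (List.isChain_cons_cons.1 hc).2 h

theorem nextV_idx {l : List V} {v w : V} (hnd : l.Nodup) (h : nextV l v = some w) :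
    l.idxOf w = l.idxOf v + 1 := by
  induction l with
  | nil => simp [nextV] at h
  | cons x t ih =>
    cases t with
    | nil => simp [nextV] at h
    | cons y t' =>
      rw [nextV] at h
      by_cases hv : v = x
      · rw [if_pos hv] at h
        have hyw : y = w := by simpa using h
        have hxy : x ≠ y := by
          intro hh
          exact (List.nodup_cons.1 hnd).1 (hh ▸ List.mem_cons_self)
        rw [hv, ← hyw, List.idxOf_cons_self, List.idxOf_cons_ne _ hxy,
          List.idxOf_cons_self]
      · rw [if_neg hv] at h
        have hwt : w ∈ y :: t' := (nextV_mem h).2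
        have hxw : x ≠ w := by
          intro hh
          exact (List.nodup_cons.1 hnd).1 (hh ▸ hwt)
        have hxv : x ≠ v := fun hh => hv hh.symm
        rw [List.idxOf_cons_ne _ hxw, List.idxOf_cons_ne _ hxv,
          ih (List.nodup_cons.1 hnd).2 h]

theorem nextV_isSome {l : List V} {v : V} (hv : v ∈ l) (hidx : l.idxOf v + 1 < l.length) :
    ∃ w, nextV l v = some w := by
  induction l with
  | nil => simp at hv
  | cons x t ih =>
    cases t with
    | nil =>
      simp only [List.length_singleton] at hidx
      omega
    | cons y t' =>
      rw [nextV]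
      by_cases hvx : v = x
      · exact ⟨y, if_pos hvx⟩
      · rw [if_neg hvx]
        refine ih (by rcases List.mem_cons.1 hv with h | h; exact absurd h hvx; exact h) ?_
        rw [List.idxOf_cons_ne _ (fun hh => hvx hh.symm)] at hidx
        simp only [List.length_cons, Nat.succ_eq_add_one] at hidx ⊢
        omega

theorem nextV_last {l : List V} {v : V} (hnd : l.Nodup) (h : l.getLast? = some v) :
    nextV l v = none := by
  induction l with
  | nil => simp at h
  | cons x t ih =>
    cases t with
    | nil => simp [nextV]
    | cons y t' =>
      rw [List.getLast?_cons_cons] at h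
      have hvt : v ∈ y :: t' := by
        obtain ⟨hne, heq⟩ := List.mem_getLast?_eq_getLast h
        exact heq ▸ List.getLast_mem _
      have hvx : v ≠ x := by
        intro hh
        exact (List.nodup_cons.1 hnd).1 (hh ▸ hvt)
      rw [nextV, if_neg hvx]
      exact ih (List.nodup_cons.1 hnd).2 h

theorem idx_last {l : List V} {v : V} (hnd : l.Nodup) (h : l.getLast? = some v) :
    l.idxOf v + 1 = l.length := by
  induction l with
  | nil => simp at h
  | cons x t ih =>
    cases t with
    | nil =>
      obtain rfl : x = v := by simpa using h
      simp
    | cons y t' =>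
      rw [List.getLast?_cons_cons] at h
      have hvt : v ∈ y :: t' := by
        obtain ⟨hne, heq⟩ := List.mem_getLast?_eq_getLast h
        exact heq ▸ List.getLast_mem _
      have hvx : v ≠ x := by
        intro hh
        exact (List.nodup_cons.1 hnd).1 (hh ▸ hvt)
      rw [List.idxOf_cons_ne _ (Ne.symm hvx)]
      have := ih (List.nodup_cons.1 hnd).2 h
      simp only [List.length_cons] at this ⊢
      omega

theorem last_of_idx {l : List V} {v : V} (hnd : l.Nodup) (hv : v ∈ l)
    (h : l.idxOf v + 1 = l.length) : l.getLast? = some v := by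
  induction l with
  | nil => simp at hv
  | cons x t ih =>
    cases t with
    | nil =>
      obtain rfl : v = x := by simpa using hv
      rfl
    | cons y t' =>
      by_cases hvx : v = x
      · subst hvx
        rw [List.idxOf_cons_self] at h
        simp at h
      · rw [List.idxOf_cons_ne _ (fun hh => hvx hh.symm)] at h
        rw [List.getLast?_cons_cons]
        refine ih (List.nodup_cons.1 hnd).2
          (by rcases List.mem_cons.1 hv with hh | hh; exact absurd hh hvx; exact hh) ?_
        simp only [List.length_cons] at h ⊢
        omega

end PathMatrix
section IterMatrix

variable {V : Type*} [Fintype V] [DecidableEq V]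

/-- iterate a partial function -/
def gIter (f : V → Option V) : ℕ → V → Option V :=
  fun n v => (fun o => o.bind f)^[n] (some v)

theorem gIter_zero (f : V → Option V) (v : V) : gIter f 0 v = some v := rfl

theorem gIter_succ' (f : V → Option V) (n : ℕ) (v : V) :
    gIter f (n + 1) v = (gIter f n v).bind f := by
  show (fun o => o.bind f)^[n + 1] (some v) = ((fun o => o.bind f)^[n] (some v)).bind f
  rw [Function.iterate_succ_apply']

theorem iter_bind_none (f : V → Option V) (n : ℕ) :
    (fun o => o.bind f)^[n] none = none := by
  induction n with
  | zero => rfl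
  | succ n ih => rw [Function.iterate_succ_apply]; simpa using ih

theorem gIter_succ (f : V → Option V) (n : ℕ) (v : V) :
    gIter f (n + 1) v = (f v).bind (gIter f n) := by
  have h : gIter f (n + 1) v = (fun o => o.bind f)^[n] ((some v).bind f) := by
    show (fun o => o.bind f)^[n + 1] (some v) = _
    rw [Function.iterate_succ_apply]
  rw [h]
  cases hf : f v with
  | none => simp [hf, iter_bind_none]
  | some u => simp [hf]; rfl

/-- the matrix of a partial function -/
noncomputable def Umat (f : V → Option V) : Matrix V V ℝ :=
  Matrix.of fun v w => if f w = some v then 1 else 0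

theorem Umat_pow (f : V → Option V) (n : ℕ) (v w : V) :
    (Umat f ^ n) v w = if gIter f n w = some v then 1 else 0 := by
  induction n generalizing v w with
  | zero =>
    rw [pow_zero]
    show (if v = w then (1:ℝ) else 0) = if (some w : Option V) = some v then 1 else 0
    simp [eq_comm]
  | succ n ih =>
    rw [pow_succ', Matrix.mul_apply, gIter_succ']
    cases hgn : gIter f n w with
    | none =>
      have hz : ∀ u, Umat f v u * (Umat f ^ n) u w = 0 := by
        intro u
        rw [ih, hgn, if_neg (by simp), mul_zero]
      rw [Finset.sum_congr rfl fun u _ => hz u]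
      simp
    | some u₀ =>
      simp only [Option.bind_some]
      rw [Finset.sum_eq_single u₀]
      · rw [ih, hgn, if_pos rfl, mul_one]
        rfl
      · intro u _ hu
        rw [ih, hgn, if_neg (by simpa using (Ne.symm hu)), mul_zero]
      · intro h
        exact absurd (Finset.mem_univ u₀) h

end IterMatrix
section PathMatrixMain

variable {V : Type*} [Fintype V] [DecidableEq V]

theorem path_matrix (E : V → V → Prop) (hsym : ∀ i j, E i j → E j i)
    (hirr : ∀ i, ¬ E i i) {s : ℕ} (p : Fin s → List V) (pa pb : Fin s → V)
    (hpath : ∀ i, IsPath E (p i) (pa i) (pb i))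
    (hnodup : ∀ i, (p i).Nodup)
    (hdisj : ∀ i j, i ≠ j → ∀ v ∈ p i, v ∉ p j) :
    ∃ K : Matrix V V ℝ, K.PosDef ∧ Kᵀ = K ∧
      (∀ v w, v ≠ w → ¬ E v w → K v w = 0) ∧
      (∀ k l : Fin s, K⁻¹ (pa k) (pb l) = if k = l then 1 else 0) := by
  classical
  set r : Fin s → List V := fun i => (p i).reverse with hr
  have hrnd : ∀ i, (r i).Nodup := fun i => List.nodup_reverse.2 (hnodup i)
  have hrmem : ∀ i v, v ∈ r i ↔ v ∈ p i := fun i v => List.mem_reverse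
  have hrchain : ∀ i, (r i).Chain' (fun u v => E v u) := fun i =>
    List.isChain_reverse.2 (by
      have := (hpath i).2.2
      exact this.imp (fun {u v} h => h))
  have hrlast : ∀ i, (r i).getLast? = some (pa i) := fun i => by
    rw [hr]
    simp only [List.getLast?_reverse]
    exact (hpath i).1
  have hrhead : ∀ i, (r i).head? = some (pb i) := fun i => by
    rw [hr]
    simp only [List.head?_reverse]
    exact (hpath i).2.1
  have hidx0 : ∀ i, (r i).idxOf (pb i) = 0 := by
    intro i
    have h := hrhead i
    cases hri : r i with
    | nil => rw [hri] at h; simp at h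
    | cons z t =>
      rw [hri] at h
      obtain rfl : z = pb i := by simpa using h
      simp
  set succ : V → Option V :=
    fun v => if h : ∃ i, v ∈ p i then nextV (r (Classical.choose h)) v else none with hsuccdef
  have hchoose : ∀ (i : Fin s) (v : V) (h : ∃ j, v ∈ p j), v ∈ p i → Classical.choose h = i := by
    intro i v h hv
    by_contra hne
    exact hdisj _ _ hne v (Classical.choose_spec h) hv
  have hsucc_eq : ∀ (i : Fin s) (v : V), v ∈ p i → succ v = nextV (r i) v := by
    intro i v hv
    have h : ∃ j, v ∈ p j := ⟨i, hv⟩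
    rw [hsuccdef]
    simp only []
    rw [dif_pos h, hchoose i v h hv]
  have hsucc_none : ∀ v, (¬ ∃ i, v ∈ p i) → succ v = none := by
    intro v hv
    rw [hsuccdef]
    simp only []
    rw [dif_neg hv]
  set φ : V → ℕ :=
    fun v => if h : ∃ i, v ∈ p i then (r (Classical.choose h)).idxOf v else 0 with hφdef
  have hφ_eq : ∀ (i : Fin s) (v : V), v ∈ p i → φ v = (r i).idxOf v := by
    intro i v hv
    have h : ∃ j, v ∈ p j := ⟨i, hv⟩
    rw [hφdef]
    simp only []
    rw [dif_pos h, hchoose i v h hv]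
  have hsucc_mem : ∀ {v w}, succ v = some w → ∃ i, v ∈ p i ∧ w ∈ p i := by
    intro v w h
    by_cases hex : ∃ i, v ∈ p i
    · obtain ⟨i, hi⟩ := hex
      rw [hsucc_eq i v hi] at h
      exact ⟨i, hi, (hrmem i w).1 (nextV_mem h).2⟩
    · rw [hsucc_none v hex] at h
      simp at h
  have hsucc_phi : ∀ {v w}, succ v = some w → φ w = φ v + 1 := by
    intro v w h
    obtain ⟨i, hvi, hwi⟩ := hsucc_mem h
    rw [hφ_eq i v hvi, hφ_eq i w hwi]
    rw [hsucc_eq i v hvi] at h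
    exact nextV_idx (hrnd i) h
  have hsucc_E : ∀ {v w}, succ v = some w → E v w ∧ v ≠ w := by
    intro v w h
    obtain ⟨i, hvi, hwi⟩ := hsucc_mem h
    rw [hsucc_eq i v hvi] at h
    have hrel := nextV_rel (hrchain i) h
    exact ⟨hsym _ _ hrel, fun hh => hirr v (by rw [hh] at hrel ⊢; exact hrel)⟩
  have hsucc_pa : ∀ i, succ (pa i) = none := by
    intro i
    rw [hsucc_eq i (pa i) (hpath i).head_mem]
    exact nextV_last (hrnd i) (hrlast i)
  -- the iterated successor
  have hg_phi : ∀ (n : ℕ) (v w : V), gIter succ n v = some w →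
      φ w = φ v + n ∧ ∀ i, v ∈ p i → w ∈ p i := by
    intro n
    induction n with
    | zero =>
      intro v w h
      obtain rfl : v = w := by simpa [gIter_zero] using h
      exact ⟨by simp, fun i hi => hi⟩
    | succ n ih =>
      intro v w h
      rw [gIter_succ'] at h
      cases hgn : gIter succ n v with
      | none => rw [hgn] at h; simp at h
      | some u =>
        rw [hgn] at h
        simp only [Option.bind_some] at h
        obtain ⟨h1, h2⟩ := ih v u hgn
        have h3 := hsucc_phi h
        obtain ⟨i0, hui, hwi⟩ := hsucc_mem h
        refine ⟨by omega, ?_⟩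
        intro i hvi
        have hu := h2 i hvi
        by_cases hii : i0 = i
        · exact hii ▸ hwi
        · exact absurd hu (hdisj i0 i hii u hui)
  have hg_card : ∀ v, gIter succ (Fintype.card V) v = none := by
    intro v
    by_contra h
    obtain ⟨w, hw⟩ := Option.ne_none_iff_exists'.1 h
    obtain ⟨h1, h2⟩ := hg_phi _ v w hw
    by_cases hex : ∃ i, v ∈ p i
    · obtain ⟨i, hi⟩ := hex
      have hwi := h2 i hi
      have hφw : φ w = (r i).idxOf w := hφ_eq i w hwi
      have hlt : (r i).idxOf w < (r i).length :=
        List.idxOf_lt_length_iff.2 ((hrmem i w).2 hwi)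
      have hle : (r i).length ≤ Fintype.card V := (hrnd i).length_le_card
      omega
    · have hc : 0 < Fintype.card V := Fintype.card_pos_iff.2 ⟨v⟩
      obtain ⟨c, hc'⟩ : ∃ c, Fintype.card V = c + 1 := ⟨_, (Nat.succ_pred_eq_of_pos hc).symm⟩
      rw [hc', gIter_succ, hsucc_none v hex] at hw
      simp at hw
  have hg_reach : ∀ (i : Fin s) (n : ℕ) (v : V), v ∈ p i →
      (r i).idxOf v + n + 1 = (r i).length → gIter succ n v = some (pa i) := by
    intro i n
    induction n with
    | zero =>
      intro v hv hidx
      have hlast : (r i).getLast? = some v :=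
        last_of_idx (hrnd i) ((hrmem i v).2 hv) (by omega)
      have hpa := hrlast i
      rw [hlast] at hpa
      obtain rfl : v = pa i := by simpa using hpa
      exact gIter_zero succ _
    | succ n ih =>
      intro v hv hidx
      have hlt : (r i).idxOf v + 1 < (r i).length := by omega
      obtain ⟨w, hw⟩ := nextV_isSome ((hrmem i v).2 hv) hlt
      have hsw : succ v = some w := by rw [hsucc_eq i v hv]; exact hw
      have hwmem : w ∈ p i := (hrmem i w).1 (nextV_mem hw).2
      have hwidx : (r i).idxOf w = (r i).idxOf v + 1 := nextV_idx (hrnd i) hw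
      rw [gIter_succ, hsw]
      simp only [Option.bind_some]
      exact ih w hwmem (by omega)
  have hg_uniq : ∀ (i : Fin s) (n : ℕ), gIter succ n (pb i) = some (pa i) →
      n = (r i).length - 1 := by
    intro i n h
    obtain ⟨h1, _⟩ := hg_phi n (pb i) (pa i) h
    have hb : φ (pb i) = 0 := by
      rw [hφ_eq i _ (hpath i).last_mem, hidx0 i]
    have ha : φ (pa i) = (r i).length - 1 := by
      rw [hφ_eq i _ (hpath i).head_mem]
      have := idx_last (hrnd i) (hrlast i)
      omega
    omega
  have hlen_pos : ∀ i, 0 < (r i).length := by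
    intro i
    have := hrhead i
    cases hri : r i with
    | nil => rw [hri] at this; simp at this
    | cons z t => simp
  -- the matrices
  set U : Matrix V V ℝ := Umat succ with hU
  have hUapply : ∀ v w, U v w = if succ w = some v then 1 else 0 := fun v w => rfl
  have hUnil : U ^ (Fintype.card V) = 0 := by
    ext v w
    rw [hU, Umat_pow, hg_card]
    simp
  set N : Matrix V V ℝ := ∑ n ∈ Finset.range (Fintype.card V), U ^ n with hN
  have hNcomm : N * (1 - U) = 1 := by
    have h1 : N * (U - 1) = U ^ (Fintype.card V) - 1 := geom_sum_mul U (Fintype.card V)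
    rw [hUnil] at h1
    have h2 : N * (1 - U) = -(N * (U - 1)) := by
      rw [← Matrix.mul_neg, neg_sub]
    rw [h2, h1]
    simp
  have hUN : U * N = N * U := by
    rw [hN, Finset.mul_sum, Finset.sum_mul]
    exact Finset.sum_congr rfl fun n _ => by rw [← pow_succ', ← pow_succ]
  have hcommN : (1 - U) * N = 1 := by
    rw [sub_mul, one_mul, hUN, ← Matrix.mul_one N, Matrix.mul_assoc, Matrix.one_mul, ← Matrix.mul_sub, hNcomm]
  set K : Matrix V V ℝ := (1 - U) * (1 - U)ᵀ with hK
  have hKinvmat : K⁻¹ = Nᵀ * N := by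
    apply Matrix.inv_eq_right_inv
    rw [hK]
    calc (1 - U) * (1 - U)ᵀ * (Nᵀ * N)
        = (1 - U) * ((1 - U)ᵀ * Nᵀ) * N := by
          rw [Matrix.mul_assoc, Matrix.mul_assoc, Matrix.mul_assoc]
      _ = 1 := by
          rw [← Matrix.transpose_mul, hNcomm, Matrix.transpose_one, Matrix.mul_one, hcommN]
  have hKentry : ∀ v w, K v w = (if v = w then (1:ℝ) else 0) - U w v - U v w +
      ∑ u, U v u * U w u := by
    intro v w
    rw [hK]
    simp only [Matrix.mul_apply, Matrix.sub_apply, Matrix.transpose_apply, Matrix.one_apply]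
    have hterm : ∀ u, ((if v = u then (1:ℝ) else 0) - U v u) * ((if w = u then (1:ℝ) else 0) - U w u) =
        ((if v = u then (1:ℝ) else 0) * (if w = u then 1 else 0))
        - (if v = u then (1:ℝ) else 0) * U w u - U v u * (if w = u then (1:ℝ) else 0)
        + U v u * U w u := fun u => by ring
    rw [Finset.sum_congr rfl fun u _ => hterm u]
    rw [Finset.sum_add_distrib, Finset.sum_sub_distrib, Finset.sum_sub_distrib]
    congr 1
    · congr 1
      · congr 1
        · have : ∀ u, (if v = u then (1:ℝ) else 0) * (if w = u then (1:ℝ) else 0) =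
              if v = u then (if w = u then (1:ℝ) else 0) else 0 := by
            intro u; split <;> simp
          rw [Finset.sum_congr rfl fun u _ => this u, Finset.sum_ite_eq]
          simp [eq_comm]
        · have : ∀ u, (if v = u then (1:ℝ) else 0) * U w u =
              if v = u then U w u else 0 := by
            intro u; split <;> simp
          rw [Finset.sum_congr rfl fun u _ => this u, Finset.sum_ite_eq]
          simp
      · have : ∀ u, U v u * (if w = u then (1:ℝ) else 0) =
            if w = u then U v u else 0 := by
          intro u; split <;> simp [mul_comm]
        rw [Finset.sum_congr rfl fun u _ => this u, Finset.sum_ite_eq]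
        simp
  have hUcross : ∀ v w, v ≠ w → ∑ u, U v u * U w u = 0 := by
    intro v w hvw
    apply Finset.sum_eq_zero
    intro u _
    rw [hUapply, hUapply]
    by_cases h1 : succ u = some v
    · by_cases h2 : succ u = some w
      · exact absurd (by rw [h1] at h2; simpa using h2) hvw
      · rw [if_neg h2, mul_zero]
    · rw [if_neg h1, zero_mul]
  have hKsupp : ∀ v w, v ≠ w → ¬ E v w → K v w = 0 := by
    intro v w hvw hEvw
    have hU1 : U v w = 0 := by
      rw [hUapply, if_neg]
      intro hsw
      have := hsucc_E hsw
      exact hEvw (hsym _ _ this.1)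
    have hU2 : U w v = 0 := by
      rw [hUapply, if_neg]
      intro hsw
      have := hsucc_E hsw
      exact hEvw this.1
    rw [hKentry, hU1, hU2, if_neg hvw, hUcross v w hvw]
    ring
  have hKsym : Kᵀ = K := by
    ext i j
    rw [Matrix.transpose_apply, hKentry, hKentry]
    have h1 : (if j = i then (1:ℝ) else 0) = if i = j then 1 else 0 := by simp [eq_comm]
    have h2 : ∑ u, U j u * U i u = ∑ u, U i u * U j u :=
      Finset.sum_congr rfl fun u _ => mul_comm _ _
    rw [h1, h2]
    ring
  have hKpos : K.PosDef := by
    rw [Matrix.posDef_iff_dotProduct_mulVec]; constructor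
    · show Kᴴ = K
      ext i j
      rw [Matrix.conjTranspose_apply]
      have : Kᵀ i j = K i j := by rw [hKsym]
      rw [Matrix.transpose_apply] at this
      rw [show star (K j i) = K j i from rfl, this]
    · intro x hx
      set yv : V → ℝ := (1 - U)ᵀ *ᵥ x with hyv
      have h1 : dotProduct (star x) (K *ᵥ x) = dotProduct yv yv := by
        rw [show star x = x from rfl, hK, ← Matrix.mulVec_mulVec, Matrix.dotProduct_mulVec, hyv]
        congr 1
        rw [← Matrix.mulVec_transpose]
      have hy : yv ≠ 0 := by
        intro h0
        apply hx
        have h2 : Nᵀ *ᵥ yv = x := by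
          rw [hyv, Matrix.mulVec_mulVec, ← Matrix.transpose_mul, hcommN,
            Matrix.transpose_one, Matrix.one_mulVec]
        rw [← h2, h0, Matrix.mulVec_zero]
      rw [h1]
      obtain ⟨u₀, hu₀⟩ := Function.ne_iff.1 hy
      have hpos : (0:ℝ) < ∑ u, yv u * yv u := by
        refine Finset.sum_pos' (fun u _ => mul_self_nonneg _) ?_
        exact ⟨u₀, Finset.mem_univ _, mul_self_pos.2 (by simpa using hu₀)⟩
      simpa [dotProduct] using hpos
  have hNentry : ∀ v w, N v w = ∑ n ∈ Finset.range (Fintype.card V),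
      if gIter succ n w = some v then (1:ℝ) else 0 := by
    intro v w
    rw [hN, Matrix.sum_apply]
    exact Finset.sum_congr rfl fun n _ => by rw [hU, Umat_pow]
  have hcardpos : ∀ (_ : Fin s), 0 < Fintype.card V := by
    intro k
    exact Fintype.card_pos_iff.2 ⟨pa k⟩
  have hNa : ∀ (k : Fin s) (u : V), N u (pa k) = if u = pa k then 1 else 0 := by
    intro k u
    rw [hNentry]
    rw [Finset.sum_eq_single 0]
    · rw [gIter_zero]
      simp [eq_comm]
    · intro n _ hn
      obtain ⟨n', rfl⟩ : ∃ n', n = n' + 1 := ⟨n - 1, by omega⟩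
      rw [gIter_succ, hsucc_pa k]
      simp
    · intro h
      exact absurd (Finset.mem_range.2 (hcardpos k)) h
  have hKentryinv : ∀ k l : Fin s, K⁻¹ (pa k) (pb l) = if k = l then 1 else 0 := by
    intro k l
    rw [hKinvmat, Matrix.mul_apply]
    simp only [Matrix.transpose_apply]
    have hstep : ∀ u, N u (pa k) * N u (pb l) = if u = pa k then N u (pb l) else 0 := by
      intro u
      rw [hNa k u]
      split <;> simp
    rw [Finset.sum_congr rfl fun u _ => hstep u, Finset.sum_ite_eq', if_pos (Finset.mem_univ _)]
    rw [hNentry]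
    by_cases hkl : k = l
    · subst hkl
      rw [if_pos rfl]
      have hLmem : (r k).length - 1 ∈ Finset.range (Fintype.card V) := by
        refine Finset.mem_range.2 ?_
        have h1 := (hrnd k).length_le_card
        have h2 := hlen_pos k
        omega
      rw [Finset.sum_eq_single ((r k).length - 1)]
      · rw [if_pos]
        refine hg_reach k _ (pb k) (hpath k).last_mem ?_
        rw [hidx0 k]
        have := hlen_pos k
        omega
      · intro n _ hn
        rw [if_neg]
        intro hg
        exact hn (hg_uniq k n hg)
      · intro h
        exact absurd hLmem h
    · rw [if_neg hkl]
      apply Finset.sum_eq_zero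
      intro n _
      rw [if_neg]
      intro hg
      have := (hg_phi n (pb l) (pa k) hg).2 l (hpath l).last_mem
      exact hdisj k l hkl (pa k) (hpath k).head_mem this
  exact ⟨K, hKpos, hKsym, hKsupp, hKentryinv⟩

end PathMatrixMain
section RankLemmas

theorem rank_submatrix_le' {m₁ n₁ m₂ n₂ : Type*} [Fintype m₁] [Fintype n₁]
    [Fintype m₂] [Fintype n₂] [DecidableEq m₁] [DecidableEq m₂]
    (M : Matrix m₁ m₂ ℝ) (f : n₁ → m₁) (g : n₂ → m₂) :
    (M.submatrix f g).rank ≤ M.rank := by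
  classical
  have hfac : M.submatrix f g =
      (Matrix.of fun (i : n₁) (j : m₁) => if f i = j then (1:ℝ) else 0) * M *
      (Matrix.of fun (i : m₂) (j : n₂) => if i = g j then (1:ℝ) else 0) := by
    ext i j
    rw [Matrix.mul_apply]
    have hstep : ∀ b, ((Matrix.of fun (i : n₁) (j : m₁) => if f i = j then (1:ℝ) else 0) * M) i b *
        (Matrix.of fun (i : m₂) (j : n₂) => if i = g j then (1:ℝ) else 0) b j =
        if b = g j then ((Matrix.of fun (i : n₁) (j : m₁) => if f i = j then (1:ℝ) else 0) * M) i b else 0 := by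
      intro b
      simp only [Matrix.of_apply]
      split <;> simp
    rw [Finset.sum_congr rfl fun b _ => hstep b, Finset.sum_ite_eq', if_pos (Finset.mem_univ _)]
    rw [Matrix.mul_apply]
    have hstep2 : ∀ a, (Matrix.of fun (i : n₁) (j : m₁) => if f i = j then (1:ℝ) else 0) i a * M a (g j) =
        if f i = a then M a (g j) else 0 := by
      intro a
      simp only [Matrix.of_apply]
      split <;> simp
    rw [Finset.sum_congr rfl fun a _ => hstep2 a, Finset.sum_ite_eq, if_pos (Finset.mem_univ _)]
    rfl
  rw [hfac]
  exact le_trans (Matrix.rank_mul_le_left _ _) (Matrix.rank_mul_le_right _ _)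

theorem posdef_submatrix {n m : Type*} [Fintype n] [Fintype m] [DecidableEq n] [DecidableEq m]
    {M : Matrix n n ℝ} (hM : M.PosDef) (f : m → n) (hf : Function.Injective f) :
    (M.submatrix f f).PosDef := by
  classical
  rw [Matrix.posDef_iff_dotProduct_mulVec]; constructor
  · show (M.submatrix f f)ᴴ = M.submatrix f f
    rw [Matrix.conjTranspose_submatrix, hM.1]
  · intro x hx
    set y : n → ℝ := fun v => if h : ∃ u, f u = v then x h.choose else 0 with hy
    have hyf : ∀ u, y (f u) = x u := by
      intro u
      have h : ∃ u', f u' = f u := ⟨u, rfl⟩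
      rw [hy]
      simp only []
      rw [dif_pos h]
      congr 1
      exact hf h.choose_spec
    have hy0 : ∀ v, (¬ ∃ u, f u = v) → y v = 0 := by
      intro v hv
      rw [hy]
      simp only []
      rw [dif_neg hv]
    have hyne : y ≠ 0 := by
      intro h0
      apply hx
      funext u
      have := congrFun h0 (f u)
      rw [hyf u] at this
      exact this
    have hinner : ∀ v : n, ∑ w : n, M v w * y w = ∑ u : m, M v (f u) * x u := by
      intro v
      have hfull : ∑ w : n, M v w * y w = ∑ w ∈ Finset.univ.image f, M v w * y w := by
        symm
        apply Finset.sum_subset (Finset.subset_univ _)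
        intro w _ hw
        rw [hy0 w (fun ⟨u, hu⟩ => hw (Finset.mem_image.2 ⟨u, Finset.mem_univ _, hu⟩)), mul_zero]
      rw [hfull, Finset.sum_image (fun a _ b _ h => hf h)]
      exact Finset.sum_congr rfl fun u _ => by rw [hyf]
    have houter : ∑ v : n, y v * (∑ w : n, M v w * y w)
        = ∑ u : m, x u * (∑ w : m, M (f u) (f w) * x w) := by
      have hfull : ∑ v : n, y v * (∑ w : n, M v w * y w)
          = ∑ v ∈ Finset.univ.image f, y v * (∑ w : n, M v w * y w) := by
        symm
        apply Finset.sum_subset (Finset.subset_univ _)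
        intro w _ hw
        rw [hy0 w (fun ⟨u, hu⟩ => hw (Finset.mem_image.2 ⟨u, Finset.mem_univ _, hu⟩)), zero_mul]
      rw [hfull, Finset.sum_image (fun a _ b _ h => hf h)]
      refine Finset.sum_congr rfl fun u _ => ?_
      rw [hyf, hinner (f u)]
    have hquad : dotProduct (star x) ((M.submatrix f f) *ᵥ x) =
        dotProduct (star y) (M *ᵥ y) := by
      rw [show star x = x from rfl, show star y = y from rfl]
      simp only [dotProduct, Matrix.mulVec, Matrix.submatrix_apply]
      exact houter.symm
    rw [hquad]
    exact hM.dotProduct_mulVec_pos hyne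

theorem rank_le_sep {V : Type*} [Fintype V] [DecidableEq V]
    (E : V → V → Prop) (hsym : ∀ i j, E i j → E j i)
    (S : Matrix V V ℝ) (hS : S.PosDef)
    (hsupp : ∀ i j : V, i ≠ j → ¬ E i j → S⁻¹ i j = 0)
    {A B C : Finset V} (hC : VSep E A B C) :
    (S.submatrix (fun a : {x // x ∈ A} => a.1) (fun b : {x // x ∈ B} => b.1)).rank
      ≤ C.card := by
  classical
  set K : Matrix V V ℝ := S⁻¹ with hKdef
  have hK : K.PosDef := hS.inv
  have hKS : K * S = 1 := Matrix.nonsing_inv_mul S (Matrix.isUnit_iff_isUnit_det S |>.1 hS.isUnit)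
  set R : Finset V := Finset.univ.filter
    (fun v => v ∉ C ∧ ∃ a ∈ A, ∃ p, IsPath E p a v ∧ ∀ u ∈ p, u ∉ C) with hRdef
  have hmemR : ∀ v, v ∈ R ↔ (v ∉ C ∧ ∃ a ∈ A, ∃ p, IsPath E p a v ∧ ∀ u ∈ p, u ∉ C) := by
    intro v
    rw [hRdef]
    simp
  have hr1 : ∀ a ∈ A, a ∉ C → a ∈ R := by
    intro a ha haC
    exact (hmemR a).2 ⟨haC, a, ha, [a], isPath_singleton E a, by simpa using haC⟩
  have hr2 : ∀ b ∈ B, b ∉ R := by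
    intro b hb hbR
    obtain ⟨hbC, a, ha, p, hp, hpC⟩ := (hmemR b).1 hbR
    obtain ⟨w, hwC, hwp⟩ := hC p a ha b hb hp
    exact hpC w hwp hwC
  have hr3 : ∀ v ∈ R, ∀ w, E v w → w ∉ C → w ∈ R := by
    intro v hv w hE hwC
    obtain ⟨hvC, a, ha, p, hp, hpC⟩ := (hmemR v).1 hv
    refine (hmemR w).2 ⟨hwC, a, ha, p ++ [w], hp.append_single hE, ?_⟩
    intro u hu
    rcases List.mem_append.1 hu with h | h
    · exact hpC u h
    · rcases List.mem_singleton.1 h with rfl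
      exact hwC
  have hRC : ∀ v ∈ R, v ∉ C := fun v hv => ((hmemR v).1 hv).1
  have hr4 : ∀ v ∈ R, ∀ w, w ∉ R → w ∉ C → K v w = 0 := by
    intro v hv w hwR hwC
    have hvw : v ≠ w := fun h => hwR (h ▸ hv)
    have hE : ¬ E v w := fun h => hwR (hr3 v hv w h hwC)
    exact hsupp v w hvw hE
  set KRR : Matrix {x // x ∈ R} {x // x ∈ R} ℝ :=
    K.submatrix (fun u => u.1) (fun u => u.1) with hKRR
  set KRC : Matrix {x // x ∈ R} {x // x ∈ C} ℝ :=
    K.submatrix (fun u => u.1) (fun u => u.1) with hKRC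
  have hKRRpos : KRR.PosDef := posdef_submatrix hK _ Subtype.coe_injective
  have hKRRunit : IsUnit KRR.det := isUnit_iff_ne_zero.2 hKRRpos.det_pos.ne'
  set T : Matrix {x // x ∈ A} {x // x ∈ C} ℝ :=
    Matrix.of (fun a c => if ha : a.1 ∈ R then (-(KRR⁻¹ * KRC)) ⟨a.1, ha⟩ c
      else (if a.1 = c.1 then 1 else 0)) with hT
  have hfact : S.submatrix (fun a : {x // x ∈ A} => a.1) (fun b : {x // x ∈ B} => b.1) =
      T * S.submatrix (fun c : {x // x ∈ C} => c.1) (fun b : {x // x ∈ B} => b.1) := by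
    ext a b
    set x : V → ℝ := fun v => S v b.1 with hx
    have hKx : ∀ v, ∑ u, K v u * x u = if v = b.1 then 1 else 0 := by
      intro v
      have h1 := congrFun (congrFun hKS v) b.1
      rw [Matrix.mul_apply] at h1
      rw [show ∑ u, K v u * x u = ∑ u, K v u * S u b.1 from rfl, h1, Matrix.one_apply]
    have hbR : b.1 ∉ R := hr2 b.1 b.2
    have hCsub : C ⊆ Finset.univ \ R := fun c hc =>
      Finset.mem_sdiff.2 ⟨Finset.mem_univ _, fun hcR => hRC c hcR hc⟩
    rw [Matrix.mul_apply]
    by_cases haR : a.1 ∈ R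
    · set xR : {x // x ∈ R} → ℝ := fun u => x u.1 with hxR
      set xC : {x // x ∈ C} → ℝ := fun u => x u.1 with hxC
      have hclaim : KRR *ᵥ xR = -(KRC *ᵥ xC) := by
        funext v
        have hvb : v.1 ≠ b.1 := fun h => hbR (h ▸ v.2)
        have hzero := hKx v.1
        rw [if_neg hvb] at hzero
        have e1 : (∑ u ∈ Finset.univ \ R, K v.1 u * x u) + ∑ u ∈ R, K v.1 u * x u
            = ∑ u, K v.1 u * x u := Finset.sum_sdiff (Finset.subset_univ R)
        have e2 : (∑ u ∈ (Finset.univ \ R) \ C, K v.1 u * x u) + ∑ u ∈ C, K v.1 u * x u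
            = ∑ u ∈ Finset.univ \ R, K v.1 u * x u := Finset.sum_sdiff hCsub
        have e3 : ∑ u ∈ (Finset.univ \ R) \ C, K v.1 u * x u = 0 := by
          apply Finset.sum_eq_zero
          intro u hu
          have h1 := Finset.mem_sdiff.1 hu
          have h2 := Finset.mem_sdiff.1 h1.1
          rw [hr4 v.1 v.2 u h2.2 h1.2, zero_mul]
        have hRsum : (KRR *ᵥ xR) v = ∑ u ∈ R, K v.1 u * x u := by
          rw [show (KRR *ᵥ xR) v = ∑ u : {x // x ∈ R}, K v.1 u.1 * x u.1 from rfl]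
          exact Finset.sum_coe_sort R (fun u => K v.1 u * x u)
        have hCsum : (KRC *ᵥ xC) v = ∑ u ∈ C, K v.1 u * x u := by
          rw [show (KRC *ᵥ xC) v = ∑ u : {x // x ∈ C}, K v.1 u.1 * x u.1 from rfl]
          exact Finset.sum_coe_sort C (fun u => K v.1 u * x u)
        rw [Pi.neg_apply, hRsum, hCsum]
        rw [e3, zero_add] at e2
        rw [← e2] at e1
        rw [hzero] at e1
        linarith
      have hxRsol : xR = (-(KRR⁻¹ * KRC)) *ᵥ xC := by
        have h1 : KRR⁻¹ *ᵥ (KRR *ᵥ xR) = xR := by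
          rw [Matrix.mulVec_mulVec, Matrix.nonsing_inv_mul _ hKRRunit, Matrix.one_mulVec]
        rw [← h1, hclaim, Matrix.mulVec_neg, Matrix.mulVec_mulVec, Matrix.neg_mulVec]
      have hLHS : S a.1 b.1 = xR ⟨a.1, haR⟩ := rfl
      rw [Matrix.submatrix_apply, hLHS, hxRsol]
      rw [show ((-(KRR⁻¹ * KRC)) *ᵥ xC) ⟨a.1, haR⟩
          = ∑ c : {x // x ∈ C}, (-(KRR⁻¹ * KRC)) ⟨a.1, haR⟩ c * x c.1 from rfl]
      refine Finset.sum_congr rfl fun c _ => ?_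
      rw [hT]
      simp only [Matrix.of_apply, Matrix.submatrix_apply]
      rw [dif_pos haR]
    · have haC : a.1 ∈ C := by
        by_contra haC
        exact haR (hr1 a.1 a.2 haC)
      have hstep : ∀ c : {x // x ∈ C}, T a c *
          (S.submatrix (fun c : {x // x ∈ C} => c.1) (fun b : {x // x ∈ B} => b.1)) c b
          = if c = ⟨a.1, haC⟩ then S a.1 b.1 else 0 := by
        intro c
        rw [hT]
        simp only [Matrix.of_apply, Matrix.submatrix_apply]
        rw [dif_neg haR]
        by_cases hac : a.1 = c.1
        · rw [if_pos hac, if_pos (by exact Subtype.ext hac.symm), one_mul, hac]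
        · rw [if_neg hac, if_neg (by intro h; exact hac (by rw [h])), zero_mul]
      rw [Finset.sum_congr rfl fun c _ => hstep c, Finset.sum_ite_eq', if_pos (Finset.mem_univ _)]
      rw [Matrix.submatrix_apply]
  rw [hfact]
  refine le_trans (Matrix.rank_mul_le_left _ _) ?_
  refine le_trans (Matrix.rank_le_card_width T) ?_
  rw [Fintype.card_coe]

end RankLemmas

/-- The concentration matrix determined by parameters `k` on the diagonal and the
edges of the undirected graph `G`. -/
noncomputable def Kof {m : ℕ} (E : Fin m → Fin m → Prop) [DecidableRel E]
    (k : Sym2 (Fin m) → ℝ) : Matrix (Fin m) (Fin m) ℝ :=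
  Matrix.of (fun i j => if i = j ∨ E i j then k s(i, j) else 0)

/-- The rank of the submatrix with rows in `A` and columns in `B`. -/
noncomputable def rkAB {m : ℕ} (M : Matrix (Fin m) (Fin m) ℝ)
    (A B : Finset (Fin m)) : ℕ :=
  (M.submatrix (fun a : {x // x ∈ A} => a.1) (fun b : {x // x ∈ B} => b.1)).rank


/-- **Trek separation for undirected graphical models.** For an undirected graph `G`
on `[m]`, where `Σ` ranges over positive definite matrices with `(Σ⁻¹)_{ij} = 0`
for non-edges `i ≠ j`:  `rank Σ_{A,B} ≤ r` for all such `Σ` iff some `C` with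
`#C ≤ r` separates `A` and `B`; moreover the generic rank of `Σ_{A,B}` equals the
minimum size of a separating set. -/
theorem stmt12 (m : ℕ) (E : Fin m → Fin m → Prop) [DecidableRel E]
    (hsym : ∀ i j : Fin m, E i j → E j i) (hirr : ∀ i : Fin m, ¬ E i i)
    (A B : Finset (Fin m)) :
    (∀ r : ℕ,
      ((∀ S : Matrix (Fin m) (Fin m) ℝ, S.PosDef →
          (∀ i j : Fin m, i ≠ j → ¬ E i j → S⁻¹ i j = 0) → rkAB S A B ≤ r)
        ↔ ∃ C : Finset (Fin m), C.card ≤ r ∧ VSep E A B C))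
    ∧ ∃ g : MvPolynomial (Sym2 (Fin m)) ℝ, g ≠ 0 ∧
        ∀ k : Sym2 (Fin m) → ℝ, (Kof E k).PosDef → MvPolynomial.eval k g ≠ 0 →
          rkAB (Kof E k)⁻¹ A B
            = sInf {n : ℕ | ∃ C : Finset (Fin m), VSep E A B C ∧ C.card = n} := by
  classical
  obtain ⟨P, hPpath, hPdisj⟩ := menger E hirr A B
  have hsimple : ∀ i : Fin (mincut E A B), ∃ qi, ∃ (a b : Fin m), a ∈ A ∧ b ∈ B ∧
      IsPath E qi a b ∧ qi.Nodup ∧ ∀ v ∈ qi, v ∈ P i := by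
    intro i
    obtain ⟨a, ha, b, hb, hp⟩ := hPpath i
    obtain ⟨qi, hqi, hnd, hsub⟩ := loop_erase hp
    exact ⟨qi, a, b, ha, hb, hqi, hnd, hsub⟩
  choose q pa pb hpaA hpbB hq hqnd hqsub using hsimple
  have hqdisj : ∀ i j, i ≠ j → ∀ v ∈ q i, v ∉ q j := fun i j hij v hvi hvj =>
    hPdisj i j hij v (hqsub i v hvi) (hqsub j v hvj)
  obtain ⟨K, hKpos, hKsym, hKsupp, hKinv⟩ := path_matrix E hsym hirr q pa pb hq hqnd hqdisj
  have hKdet : IsUnit K.det := isUnit_iff_ne_zero.2 hKpos.det_pos.ne'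
  have hrank : ∀ (S : Matrix (Fin m) (Fin m) ℝ),
      (∀ k l : Fin (mincut E A B), S (pa k) (pb l) = if k = l then 1 else 0) →
      mincut E A B ≤ rkAB S A B := by
    intro S hSentries
    have hsub : (S.submatrix (fun a : {x // x ∈ A} => a.1)
        (fun b : {x // x ∈ B} => b.1)).submatrix
        (fun k : Fin (mincut E A B) => (⟨pa k, hpaA k⟩ : {x // x ∈ A}))
        (fun k : Fin (mincut E A B) => (⟨pb k, hpbB k⟩ : {x // x ∈ B}))
        = (1 : Matrix (Fin (mincut E A B)) (Fin (mincut E A B)) ℝ) := by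
      ext k l
      rw [Matrix.submatrix_apply, Matrix.submatrix_apply, Matrix.one_apply]
      exact hSentries k l
    have h1 : ((S.submatrix (fun a : {x // x ∈ A} => a.1)
        (fun b : {x // x ∈ B} => b.1)).submatrix
        (fun k : Fin (mincut E A B) => (⟨pa k, hpaA k⟩ : {x // x ∈ A}))
        (fun k : Fin (mincut E A B) => (⟨pb k, hpbB k⟩ : {x // x ∈ B}))).rank
        = mincut E A B := by
      rw [hsub, Matrix.rank_one, Fintype.card_fin]
    rw [show rkAB S A B = (S.submatrix (fun a : {x // x ∈ A} => a.1)
        (fun b : {x // x ∈ B} => b.1)).rank from rfl, ← h1]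
    exact rank_submatrix_le' _ _ _
  have hupper : ∀ (S : Matrix (Fin m) (Fin m) ℝ), S.PosDef →
      (∀ i j, i ≠ j → ¬ E i j → S⁻¹ i j = 0) →
      ∀ C : Finset (Fin m), VSep E A B C → rkAB S A B ≤ C.card :=
    fun S h1 h2 C hC => rank_le_sep E hsym S h1 h2 hC
  have hS₀pos : (K⁻¹).PosDef := hKpos.inv
  have hS₀inv : (K⁻¹)⁻¹ = K := Matrix.nonsing_inv_nonsing_inv K hKdet
  have hS₀supp : ∀ i j, i ≠ j → ¬ E i j → (K⁻¹)⁻¹ i j = 0 := by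
    intro i j h1 h2
    rw [hS₀inv]
    exact hKsupp i j h1 h2
  have hS₀rank : mincut E A B ≤ rkAB K⁻¹ A B := hrank K⁻¹ (fun k l => hKinv k l)
  constructor
  · intro r
    constructor
    · intro hall
      obtain ⟨C, hCsep, hCcard⟩ := exists_mincut E A B
      exact ⟨C, by rw [hCcard]; exact le_trans hS₀rank (hall K⁻¹ hS₀pos hS₀supp), hCsep⟩
    · rintro ⟨C, hCcard, hCsep⟩ S hSpos hSsupp
      exact le_trans (hupper S hSpos hSsupp C hCsep) hCcard
  · set 𝒦 : Matrix (Fin m) (Fin m) (MvPolynomial (Sym2 (Fin m)) ℝ) :=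
      Matrix.of fun i j => if i = j ∨ E i j then MvPolynomial.X s(i,j) else 0 with h𝒦
    have hmapK : ∀ k : Sym2 (Fin m) → ℝ,
        (MvPolynomial.eval k).mapMatrix 𝒦 = Kof E k := by
      intro k
      ext i j
      rw [RingHom.mapMatrix_apply, Matrix.map_apply, h𝒦]
      simp only [Matrix.of_apply, Kof]
      split
      · rw [MvPolynomial.eval_X]
      · rw [map_zero]
    set g : MvPolynomial (Sym2 (Fin m)) ℝ := ((Matrix.adjugate 𝒦).submatrix pa pb).det with hg
    have heval : ∀ k, MvPolynomial.eval k g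
        = ((Matrix.adjugate (Kof E k)).submatrix pa pb).det := by
      intro k
      have e1 : (MvPolynomial.eval k).mapMatrix ((Matrix.adjugate 𝒦).submatrix pa pb)
          = (Matrix.adjugate (Kof E k)).submatrix pa pb := by
        rw [RingHom.mapMatrix_apply, ← Matrix.submatrix_map, ← RingHom.mapMatrix_apply,
          RingHom.map_adjugate, hmapK]
      rw [hg, RingHom.map_det, e1]
    have hadj : ∀ (M : Matrix (Fin m) (Fin m) ℝ), IsUnit M.det →
        Matrix.adjugate M = M.det • M⁻¹ := by
      intro M h
      rw [Matrix.inv_def, smul_smul, Ring.mul_inverse_cancel _ h, one_smul]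
    have hevaldet : ∀ (M : Matrix (Fin m) (Fin m) ℝ), IsUnit M.det →
        ((Matrix.adjugate M).submatrix pa pb).det
          = M.det ^ (mincut E A B) * ((M⁻¹).submatrix pa pb).det := by
      intro M h
      rw [hadj M h]
      have e2 : (M.det • M⁻¹).submatrix pa pb = M.det • ((M⁻¹).submatrix pa pb) := by
        ext k l
        simp [Matrix.submatrix_apply, Matrix.smul_apply]
      rw [e2, Matrix.det_smul, Fintype.card_fin]
    have hKsymm : ∀ i j : Fin m, K i j = K j i := by
      intro i j
      have := congrFun (congrFun hKsym i) j
      rw [Matrix.transpose_apply] at this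
      exact this.symm
    set k₀ : Sym2 (Fin m) → ℝ := Sym2.lift ⟨fun i j => K i j, hKsymm⟩ with hk₀
    have hKofk₀ : Kof E k₀ = K := by
      ext i j
      simp only [Kof, Matrix.of_apply]
      by_cases h : i = j ∨ E i j
      · rw [if_pos h, hk₀, Sym2.lift_mk]
      · rw [if_neg h]
        push_neg at h
        exact (hKsupp i j h.1 h.2).symm
    have hS₀sub : ((K⁻¹).submatrix pa pb)
        = (1 : Matrix (Fin (mincut E A B)) (Fin (mincut E A B)) ℝ) := by
      ext k l
      rw [Matrix.submatrix_apply, hKinv k l, Matrix.one_apply]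
    have hgne : g ≠ 0 := by
      intro h0
      have h1 := heval k₀
      rw [h0, map_zero, hKofk₀, hevaldet K hKdet, hS₀sub, Matrix.det_one, mul_one] at h1
      exact (pow_ne_zero _ hKpos.det_pos.ne') h1.symm
    refine ⟨g, hgne, ?_⟩
    intro k hkpos hkeval
    have hsetsinf : sInf {n : ℕ | ∃ C : Finset (Fin m), VSep E A B C ∧ C.card = n}
        = mincut E A B := rfl
    rw [hsetsinf]
    have hdetk : IsUnit (Kof E k).det := isUnit_iff_ne_zero.2 hkpos.det_pos.ne'
    have hSpos : ((Kof E k)⁻¹).PosDef := hkpos.inv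
    have hSinv : ((Kof E k)⁻¹)⁻¹ = Kof E k := Matrix.nonsing_inv_nonsing_inv _ hdetk
    have hSsupp : ∀ i j, i ≠ j → ¬ E i j → ((Kof E k)⁻¹)⁻¹ i j = 0 := by
      intro i j h1 h2
      rw [hSinv]
      simp only [Kof, Matrix.of_apply]
      rw [if_neg]
      rintro (h | h)
      · exact h1 h
      · exact h2 h
    obtain ⟨C, hCsep, hCcard⟩ := exists_mincut E A B
    have hub : rkAB (Kof E k)⁻¹ A B ≤ mincut E A B := by
      rw [← hCcard]
      exact hupper _ hSpos hSsupp C hCsep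
    have hlow : mincut E A B ≤ rkAB (Kof E k)⁻¹ A B := by
      have h1 := heval k
      rw [hevaldet _ hdetk] at h1
      have h2 : (((Kof E k)⁻¹).submatrix pa pb).det ≠ 0 := by
        intro h0
        exact hkeval (by rw [h1, h0, mul_zero])
      have h3 : (((Kof E k)⁻¹).submatrix pa pb).rank = mincut E A B := by
        rw [Matrix.rank_of_isUnit _ ((Matrix.isUnit_iff_isUnit_det _).2
          (isUnit_iff_ne_zero.2 h2)), Fintype.card_fin]
      have hcomp : ((Kof E k)⁻¹).submatrix pa pb
          = (((Kof E k)⁻¹).submatrix (fun a : {x // x ∈ A} => a.1)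
            (fun b : {x // x ∈ B} => b.1)).submatrix
            (fun j : Fin (mincut E A B) => (⟨pa j, hpaA j⟩ : {x // x ∈ A}))
            (fun j : Fin (mincut E A B) => (⟨pb j, hpbB j⟩ : {x // x ∈ B})) := by
        rw [Matrix.submatrix_submatrix]
        rfl
      rw [show rkAB (Kof E k)⁻¹ A B = (((Kof E k)⁻¹).submatrix
        (fun a : {x // x ∈ A} => a.1) (fun b : {x // x ∈ B} => b.1)).rank from rfl]
      rw [← h3, hcomp]
      exact rank_submatrix_le' _ _ _
    exact le_antisymm hub hlow
end

section
/- Let $G$ be a mixed graph with directed and bidirected edges (no undirected edges), and let $\widetilde{G}$ be its canonical DAG, obtained by replacing each bidirected edge $i \leftrightarrow j$ by a new vertex $v_{i,j}$ with directed edges $v_{i,j}\to i$ and $v_{i,j}\to j$. Then for any vertex sets $A, B \subseteq V(G)$ and any $r$: there exists a pair $(C_L, C_R)$ of subsets of $V(G)$ with $\#C_L + \#C_R \le r$ trek-separating $A$ from $B$ in $G$ if and only if there exists a pair $(D_L, D_R)$ of subsets of $V(\widetilde G)$ with $\#D_L + \#D_R \le r$ trek-separating $A$ from $B$ in $\widetilde{G}$.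 -/
/-- Trek separation in a directed graph: `(C_A, C_B)` trek-separates `A` from `B`
if every trek (pair of directed paths with a common source) from `A` to `B` has its
`A`-side path meeting `C_A` or its `B`-side path meeting `C_B`. -/
def TSep {V : Type*} (E : V → V → Prop) (A B CA CB : Finset V) : Prop :=
  ∀ a ∈ A, ∀ b ∈ B, ∀ P₁ P₂ : List V,
    (∃ k, IsPath E P₁ k a ∧ IsPath E P₂ k b) →
    (∃ v ∈ CA, v ∈ P₁) ∨ (∃ v ∈ CB, v ∈ P₂)

/-- Trek separation in a mixed graph with directed edges `Dir` and bidirected edges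
`Bi` (no undirected edges): every trek `(P_L, P_M, P_R)` — `P_L, P_R` directed paths
into `A`, `B` whose sources either coincide or are joined by a bidirected edge — has
`P_L` meeting `C_L` or `P_R` meeting `C_R`. -/
def MixedTSep2 {V : Type*} (Dir Bi : V → V → Prop) (A B CL CR : Finset V) : Prop :=
  ∀ a ∈ A, ∀ b ∈ B, ∀ (PL PR : List V) (sL sR : V),
    IsPath Dir PL sL a → IsPath Dir PR sR b → (sL = sR ∨ Bi sL sR) →
    (∃ v ∈ CL, v ∈ PL) ∨ (∃ v ∈ CR, v ∈ PR)

/-- The edge relation of the canonical DAG `G̃` of a mixed graph with directed and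
bidirected edges: each bidirected edge `i ↔ j` is replaced by a new vertex
`v_{i,j}` with edges `v_{i,j} → i` and `v_{i,j} → j`. -/
def CanonDAG {m : ℕ} (Dir Bi : Fin m → Fin m → Prop) :
    (Fin m ⊕ Sym2 (Fin m)) → (Fin m ⊕ Sym2 (Fin m)) → Prop
  | .inl a, .inl b => Dir a b
  | .inr e, .inl a => a ∈ e ∧ ∃ x y : Fin m, e = s(x, y) ∧ Bi x y
  | _, _ => False

namespace Stmt16Aux

variable {m : ℕ} {Dir Bi : Fin m → Fin m → Prop}

lemma canon_not_inr {u : Fin m ⊕ Sym2 (Fin m)} {e : Sym2 (Fin m)} :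
    ¬ CanonDAG Dir Bi u (Sum.inr e) := by
  cases u <;> exact fun h => h

lemma getLast?_inl {q : List (Fin m)} {a : Fin m}
    (h : (q.map (Sum.inl : Fin m → Fin m ⊕ Sym2 (Fin m))).getLast? = some (Sum.inl a)) :
    q.getLast? = some a := by
  rw [List.getLast?_map] at h
  cases hq : q.getLast? with
  | none => rw [hq] at h; simp at h
  | some z => rw [hq] at h; simp at h; rw [h]

lemma chain_from_inl : ∀ (P : List (Fin m ⊕ Sym2 (Fin m))) (i : Fin m),
    List.Chain (CanonDAG Dir Bi) (Sum.inl i) P →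
    ∃ q : List (Fin m), P = q.map Sum.inl ∧ List.Chain Dir i q := by
  intro P
  induction P with
  | nil => exact fun i _ => ⟨[], rfl, List.Chain.nil⟩
  | cons h t ih =>
    intro i hc
    rw [List.Chain, List.chain_cons] at hc
    obtain ⟨h1, h2⟩ := hc
    cases h with
    | inl j =>
      obtain ⟨q, rfl, hq⟩ := ih j h2
      exact ⟨j :: q, rfl, List.Chain.cons h1 hq⟩
    | inr e => exact absurd h1 canon_not_inr

lemma path_decomp {P : List (Fin m ⊕ Sym2 (Fin m))} {k : Fin m ⊕ Sym2 (Fin m)} {a : Fin m}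
    (hP : IsPath (CanonDAG Dir Bi) P k (Sum.inl a)) :
    (∃ q : List (Fin m), ∃ i : Fin m, k = Sum.inl i ∧ P = q.map Sum.inl ∧ IsPath Dir q i a)
    ∨ (∃ e : Sym2 (Fin m), ∃ q : List (Fin m), ∃ i : Fin m, k = Sum.inr e ∧
        P = Sum.inr e :: q.map Sum.inl ∧ CanonDAG Dir Bi (Sum.inr e) (Sum.inl i) ∧
        IsPath Dir q i a) := by
  obtain ⟨hh, hl, hc⟩ := hP
  cases P with
  | nil => simp at hh
  | cons x rest =>
    simp only [List.head?_cons, Option.some.injEq] at hh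
    subst hh
    cases x with
    | inl i =>
      obtain ⟨q, rfl, hq⟩ := chain_from_inl rest i hc
      exact Or.inl ⟨i :: q, i, rfl, rfl, rfl, getLast?_inl hl, hq⟩
    | inr e =>
      cases rest with
      | nil => simp [List.getLast?] at hl
      | cons y t =>
        rw [show List.Chain' (CanonDAG Dir Bi) (Sum.inr e :: y :: t)
              = List.Chain (CanonDAG Dir Bi) (Sum.inr e) (y :: t) from rfl,
            List.Chain, List.chain_cons] at hc
        obtain ⟨h1, h2⟩ := hc
        cases y with
        | inr e' => exact absurd h1 canon_not_inr
        | inl s =>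
          obtain ⟨q, rfl, hq⟩ := chain_from_inl t s h2
          refine Or.inr ⟨e, s :: q, s, rfl, rfl, h1, rfl, ?_, hq⟩
          have hL : (Sum.inl s :: List.map Sum.inl q :
              List (Fin m ⊕ Sym2 (Fin m))).getLast? = some (Sum.inl a) := by
            rw [List.getLast?_cons] at hl
            cases hq' : (Sum.inl s :: List.map Sum.inl q :
                List (Fin m ⊕ Sym2 (Fin m))).getLast? with
            | none => simp at hq'
            | some w => rw [hq'] at hl; simp at hl ⊢; exact hl
          exact getLast?_inl hL

lemma isPath_map_inl {q : List (Fin m)} {i a : Fin m} (h : IsPath Dir q i a) :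
    IsPath (CanonDAG Dir Bi) (q.map Sum.inl) (Sum.inl i) (Sum.inl a) := by
  obtain ⟨hh, hl, hc⟩ := h
  refine ⟨?_, ?_, ?_⟩
  · rw [List.head?_map, hh]; rfl
  · rw [List.getLast?_map, hl]; rfl
  · rw [List.Chain', List.isChain_map]; exact hc

lemma isPath_cons_inr {e : Sym2 (Fin m)} {q : List (Fin m)} {i a : Fin m}
    (hedge : CanonDAG Dir Bi (Sum.inr e) (Sum.inl i)) (h : IsPath Dir q i a) :
    IsPath (CanonDAG Dir Bi) (Sum.inr e :: q.map Sum.inl) (Sum.inr e) (Sum.inl a) := by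
  have h' : IsPath (CanonDAG Dir Bi) (q.map Sum.inl) (Sum.inl i) (Sum.inl a) :=
    isPath_map_inl h
  obtain ⟨hh, hl, hc⟩ := h'
  refine ⟨rfl, ?_, ?_⟩
  · rw [List.getLast?_cons, hl]; rfl
  · rw [List.Chain', List.isChain_cons]
    refine ⟨?_, hc⟩
    intro y hy
    rw [hh] at hy
    simp at hy
    subst hy
    exact hedge

lemma tsep_swap {V : Type*} {E : V → V → Prop} {A B CA CB : Finset V}
    (h : TSep E A B CA CB) : TSep E B A CB CA := by
  intro b hb a ha P₂ P₁ hk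
  obtain ⟨k, h2, h1⟩ := hk
  rcases h a ha b hb P₁ P₂ ⟨k, h1, h2⟩ with hx | hx
  · exact Or.inr hx
  · exact Or.inl hx


lemma extract_fail {A B : Finset (Fin m)} {DL DR : Finset (Fin m ⊕ Sym2 (Fin m))}
    {x y z : Fin m}
    (hsep : TSep (CanonDAG Dir Bi) (A.image Sum.inl) (B.image Sum.inl) DL DR)
    (hz : ¬ TSep (CanonDAG Dir Bi) (A.image Sum.inl) (B.image Sum.inl)
      (insert (Sum.inl z) (DL.erase (Sum.inr s(x, y)))) DR) :
    ∃ a ∈ A, ∃ b ∈ B, ∃ (i j : Fin m) (q p : List (Fin m)),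
      (i = x ∨ i = y) ∧ z ∉ q ∧ (j = x ∨ j = y) ∧
      IsPath Dir q i a ∧ IsPath Dir p j b ∧
      (∀ u : Fin m, Sum.inl u ∈ DL → u ∉ q) ∧
      (∀ v ∈ DR, v ∉ p.map (Sum.inl : Fin m → Fin m ⊕ Sym2 (Fin m))) := by
  simp only [TSep, not_forall] at hz
  push_neg at hz
  obtain ⟨a₁, ha₁, b₁, hb₁, P₁, P₂, ⟨k, hP₁, hP₂⟩, hL, hR⟩ := hz
  obtain ⟨a, ha, rfl⟩ := Finset.mem_image.1 ha₁
  obtain ⟨b, hb, rfl⟩ := Finset.mem_image.1 hb₁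
  -- the old pair must block this trek, necessarily via `inr s(x,y) ∈ P₁`
  have hmem : Sum.inr s(x, y) ∈ P₁ := by
    rcases hsep _ ha₁ _ hb₁ P₁ P₂ ⟨k, hP₁, hP₂⟩ with ⟨v, hv, hvP⟩ | ⟨v, hv, hvP⟩
    · by_cases hve : v = Sum.inr s(x, y)
      · rwa [hve] at hvP
      · exact absurd hvP (hL v (Finset.mem_insert_of_mem (Finset.mem_erase.2 ⟨hve, hv⟩)))
    · exact absurd hvP (hR v hv)
  have hznot : Sum.inl z ∉ P₁ := hL _ (Finset.mem_insert_self _ _)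
  rcases path_decomp hP₁ with ⟨q, i, hk, rfl, hq⟩ | ⟨e₁, q, i, hk, rfl, hedge, hq⟩
  · exfalso; rcases List.mem_map.1 hmem with ⟨u, _, hu⟩; exact Sum.inl_ne_inr hu
  · have he₁ : e₁ = s(x, y) := by
      rcases List.mem_cons.1 hmem with h | h
      · exact (Sum.inr.injEq _ _ ▸ h.symm : e₁ = s(x,y))
      · exfalso; rcases List.mem_map.1 h with ⟨u, _, hu⟩; exact Sum.inl_ne_inr hu
    subst he₁
    subst hk
    rcases path_decomp hP₂ with ⟨p, j, hk2, rfl, hp⟩ | ⟨e₂, p, j, hk2, rfl, hedge2, hp⟩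
    · exact absurd hk2 (by simp)
    · have he₂ : e₂ = s(x, y) := by
        have := hk2.symm
        simpa using this
      subst he₂
      refine ⟨a, ha, b, hb, i, j, q, p, ?_, ?_, ?_, hq, hp, ?_, ?_⟩
      · exact Sym2.mem_iff.1 hedge.1
      · intro hzq
        exact hznot (List.mem_cons_of_mem _ (List.mem_map_of_mem (f := Sum.inl) hzq))
      · exact Sym2.mem_iff.1 hedge2.1
      · intro u hu huq
        exact hL (Sum.inl u)
          (Finset.mem_insert_of_mem (Finset.mem_erase.2 ⟨by simp, hu⟩))
          (List.mem_cons_of_mem _ (List.mem_map_of_mem (f := Sum.inl) huq))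
      · intro v hv hvp
        exact hR v hv (List.mem_cons_of_mem _ hvp)

lemma head_mem_of_isPath {q : List (Fin m)} {i a : Fin m} (h : IsPath Dir q i a) : i ∈ q :=
  List.mem_of_mem_head? (by rw [h.1]; simp)

lemma replace_left {A B : Finset (Fin m)} {DL DR : Finset (Fin m ⊕ Sym2 (Fin m))}
    {e : Sym2 (Fin m)} (he : Sum.inr e ∈ DL)
    (hsep : TSep (CanonDAG Dir Bi) (A.image Sum.inl) (B.image Sum.inl) DL DR) :
    ∃ DL' : Finset (Fin m ⊕ Sym2 (Fin m)),
      DL'.card ≤ DL.card ∧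
      (DL'.filter (fun v => v.isRight)).card < (DL.filter (fun v => v.isRight)).card ∧
      TSep (CanonDAG Dir Bi) (A.image Sum.inl) (B.image Sum.inl) DL' DR := by
  induction e using Sym2.ind with
  | _ x y =>
  have hfacts : ∀ z : Fin m,
      (insert (Sum.inl z) (DL.erase (Sum.inr s(x, y)))).card ≤ DL.card ∧
      ((insert (Sum.inl z) (DL.erase (Sum.inr s(x, y)))).filter
        (fun v => v.isRight)).card < (DL.filter (fun v => v.isRight)).card := by
    intro z
    constructor
    · calc (insert (Sum.inl z) (DL.erase (Sum.inr s(x, y)))).card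
          ≤ (DL.erase (Sum.inr s(x, y))).card + 1 := Finset.card_insert_le _ _
      _ ≤ DL.card := by
          rw [Finset.card_erase_of_mem he]
          have : 1 ≤ DL.card := Finset.card_pos.2 ⟨_, he⟩
          omega
    · rw [Finset.filter_insert]
      rw [if_neg (by simp), Finset.filter_erase]
      exact Finset.card_erase_lt_of_mem (Finset.mem_filter.2 ⟨he, rfl⟩)
  by_cases hx : TSep (CanonDAG Dir Bi) (A.image Sum.inl) (B.image Sum.inl)
      (insert (Sum.inl x) (DL.erase (Sum.inr s(x, y)))) DR
  · exact ⟨_, (hfacts x).1, (hfacts x).2, hx⟩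
  by_cases hy : TSep (CanonDAG Dir Bi) (A.image Sum.inl) (B.image Sum.inl)
      (insert (Sum.inl y) (DL.erase (Sum.inr s(x, y)))) DR
  · exact ⟨_, (hfacts y).1, (hfacts y).2, hy⟩
  exfalso
  obtain ⟨a, ha, b, hb, i, j, q, p, hi, hzq, hj, hqa, hpb, hqDL, hpDR⟩ :=
    extract_fail hsep hx
  obtain ⟨a', ha', b', hb', i', j', q', p', hi', hzq', hj', hqa', hpb', hqDL', hpDR'⟩ :=
    extract_fail hsep hy
  have hiy : i = y := by
    rcases hi with rfl | rfl
    · exact absurd (head_mem_of_isPath hqa) hzq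
    · rfl
  have hix : i' = x := by
    rcases hi' with rfl | rfl
    · rfl
    · exact absurd (head_mem_of_isPath hqa') hzq'
  subst hiy; subst hix
  rcases hj with rfl | rfl
  · -- common-source trek at `inl j = inl x` : left from the y-failure (q'), right p
    rcases hsep (Sum.inl a') (Finset.mem_image_of_mem _ ha')
        (Sum.inl b) (Finset.mem_image_of_mem _ hb)
        (q'.map Sum.inl) (p.map Sum.inl)
        ⟨Sum.inl j, isPath_map_inl hqa', isPath_map_inl hpb⟩ with ⟨v, hv, hvP⟩ | ⟨v, hv, hvP⟩
    · rcases List.mem_map.1 hvP with ⟨u, hu, rfl⟩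
      exact hqDL' u hv hu
    · exact hpDR v hv hvP
  · -- common-source trek at `inl j = inl y` : left q, right p
    rcases hsep (Sum.inl a) (Finset.mem_image_of_mem _ ha)
        (Sum.inl b) (Finset.mem_image_of_mem _ hb)
        (q.map Sum.inl) (p.map Sum.inl)
        ⟨Sum.inl j, isPath_map_inl hqa, isPath_map_inl hpb⟩ with ⟨v, hv, hvP⟩ | ⟨v, hv, hvP⟩
    · rcases List.mem_map.1 hvP with ⟨u, hu, rfl⟩
      exact hqDL u hv hu
    · exact hpDR v hv hvP


lemma reduce {A B : Finset (Fin m)} :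
    ∀ n (DL DR : Finset (Fin m ⊕ Sym2 (Fin m))),
    (DL.filter (fun v => v.isRight)).card + (DR.filter (fun v => v.isRight)).card = n →
    TSep (CanonDAG Dir Bi) (A.image Sum.inl) (B.image Sum.inl) DL DR →
    ∃ CL CR : Finset (Fin m), CL.card + CR.card ≤ DL.card + DR.card ∧
      TSep (CanonDAG Dir Bi) (A.image Sum.inl) (B.image Sum.inl)
        (CL.image Sum.inl) (CR.image Sum.inl) := by
  intro n
  induction n using Nat.strong_induction_on with
  | _ n ih =>
  intro DL DR hn hsep
  rcases Nat.eq_zero_or_pos n with rfl | hpos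
  · -- no `inr` elements at all
    have hDL : ∀ v ∈ DL, ∃ u, v = Sum.inl u := by
      intro v hv
      cases v with
      | inl u => exact ⟨u, rfl⟩
      | inr e =>
        exfalso
        have h1 : (Sum.inr e : Fin m ⊕ Sym2 (Fin m)) ∈ DL.filter (fun v => v.isRight) :=
          Finset.mem_filter.2 ⟨hv, rfl⟩
        have : (DL.filter (fun v => v.isRight)).card = 0 := by omega
        rw [Finset.card_eq_zero] at this
        simp [this] at h1
    have hDR : ∀ v ∈ DR, ∃ u, v = Sum.inl u := by
      intro v hv
      cases v with
      | inl u => exact ⟨u, rfl⟩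
      | inr e =>
        exfalso
        have h1 : (Sum.inr e : Fin m ⊕ Sym2 (Fin m)) ∈ DR.filter (fun v => v.isRight) :=
          Finset.mem_filter.2 ⟨hv, rfl⟩
        have : (DR.filter (fun v => v.isRight)).card = 0 := by omega
        rw [Finset.card_eq_zero] at this
        simp [this] at h1
    refine ⟨DL.preimage Sum.inl Sum.inl_injective.injOn,
            DR.preimage Sum.inl Sum.inl_injective.injOn, ?_, ?_⟩
    · have h1 : (DL.preimage Sum.inl Sum.inl_injective.injOn).card ≤ DL.card :=
        Finset.card_le_card_of_injOn Sum.inl (fun u hu => Finset.mem_preimage.1 hu)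
          Sum.inl_injective.injOn
      have h2 : (DR.preimage Sum.inl Sum.inl_injective.injOn).card ≤ DR.card :=
        Finset.card_le_card_of_injOn Sum.inl (fun u hu => Finset.mem_preimage.1 hu)
          Sum.inl_injective.injOn
      omega
    · intro a ha b hb P₁ P₂ htrek
      rcases hsep a ha b hb P₁ P₂ htrek with ⟨v, hv, hvP⟩ | ⟨v, hv, hvP⟩
      · obtain ⟨u, rfl⟩ := hDL v hv
        exact Or.inl ⟨Sum.inl u,
          Finset.mem_image_of_mem _ (Finset.mem_preimage.2 hv), hvP⟩
      · obtain ⟨u, rfl⟩ := hDR v hv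
        exact Or.inr ⟨Sum.inl u,
          Finset.mem_image_of_mem _ (Finset.mem_preimage.2 hv), hvP⟩
  · -- some `inr` element exists; replace it
    have hor : 0 < (DL.filter (fun v => v.isRight)).card ∨
        0 < (DR.filter (fun v => v.isRight)).card := by omega
    rcases hor with hc | hc
    · obtain ⟨v, hv⟩ := Finset.card_pos.1 hc
      obtain ⟨hvDL, hvR⟩ := Finset.mem_filter.1 hv
      obtain ⟨e, rfl⟩ : ∃ e, v = Sum.inr e := by
        cases v with
        | inl u => simp at hvR
        | inr e => exact ⟨e, rfl⟩
      obtain ⟨DL', hcard, hmeas, hsep'⟩ := replace_left hvDL hsep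
      obtain ⟨CL, CR, hc', hs'⟩ := ih
        ((DL'.filter (fun v => v.isRight)).card + (DR.filter (fun v => v.isRight)).card)
        (by omega) DL' DR rfl hsep'
      exact ⟨CL, CR, by omega, hs'⟩
    · obtain ⟨v, hv⟩ := Finset.card_pos.1 hc
      obtain ⟨hvDR, hvR⟩ := Finset.mem_filter.1 hv
      obtain ⟨e, rfl⟩ : ∃ e, v = Sum.inr e := by
        cases v with
        | inl u => simp at hvR
        | inr e => exact ⟨e, rfl⟩
      obtain ⟨DR', hcard, hmeas, hsep'⟩ := replace_left hvDR (tsep_swap hsep)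
      obtain ⟨CL, CR, hc', hs'⟩ := ih
        ((DL.filter (fun v => v.isRight)).card + (DR'.filter (fun v => v.isRight)).card)
        (by omega) DL DR' rfl (tsep_swap hsep')
      exact ⟨CL, CR, by omega, hs'⟩

end Stmt16Aux

/-- **Trek separation and the canonical DAG.** For a mixed graph `G` with directed
and bidirected edges and its canonical DAG `G̃`: there is a pair `(C_L, C_R)` of
subsets of `V(G)` with `#C_L + #C_R ≤ r` trek-separating `A` from `B` in `G` iff
there is a pair `(D_L, D_R)` of subsets of `V(G̃)` with `#D_L + #D_R ≤ r`
trek-separating `A` from `B` in `G̃`. -/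


theorem stmt16 (m : ℕ) (Dir Bi : Fin m → Fin m → Prop)
    (hDir : ∀ i j : Fin m, Dir i j → i < j)
    (hBi : ∀ i j : Fin m, Bi i j → Bi j i)
    (A B : Finset (Fin m)) (r : ℕ) :
    (∃ CL CR : Finset (Fin m), CL.card + CR.card ≤ r
        ∧ MixedTSep2 Dir Bi A B CL CR)
    ↔ ∃ DL DR : Finset (Fin m ⊕ Sym2 (Fin m)), DL.card + DR.card ≤ r
        ∧ TSep (CanonDAG Dir Bi) (A.image Sum.inl) (B.image Sum.inl) DL DR := by
  open Stmt16Aux in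
  constructor
  · rintro ⟨CL, CR, hcard, hmix⟩
    refine ⟨CL.image Sum.inl, CR.image Sum.inl, ?_, ?_⟩
    · have := Finset.card_image_le (s := CL) (f := (Sum.inl : Fin m → Fin m ⊕ Sym2 (Fin m)))
      have := Finset.card_image_le (s := CR) (f := (Sum.inl : Fin m → Fin m ⊕ Sym2 (Fin m)))
      omega
    · intro a₁ ha₁ b₁ hb₁ P₁ P₂ htrek
      obtain ⟨k, hP₁, hP₂⟩ := htrek
      obtain ⟨a, ha, rfl⟩ := Finset.mem_image.1 ha₁
      obtain ⟨b, hb, rfl⟩ := Finset.mem_image.1 hb₁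
      rcases path_decomp hP₁ with ⟨q₁, i₁, hk₁, rfl, hq₁⟩ | ⟨e₁, q₁, i₁, hk₁, rfl, hedge₁, hq₁⟩ <;>
        rcases path_decomp hP₂ with ⟨q₂, i₂, hk₂, rfl, hq₂⟩ | ⟨e₂, q₂, i₂, hk₂, rfl, hedge₂, hq₂⟩
      · -- both start at a common original vertex
        subst hk₁
        have hii : i₁ = i₂ := Sum.inl_injective hk₂
        subst hii
        rcases hmix a ha b hb q₁ q₂ i₁ i₁ hq₁ hq₂ (Or.inl rfl) with ⟨v, hv, hvq⟩ | ⟨v, hv, hvq⟩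
        · exact Or.inl ⟨Sum.inl v, Finset.mem_image_of_mem _ hv, List.mem_map_of_mem hvq⟩
        · exact Or.inr ⟨Sum.inl v, Finset.mem_image_of_mem _ hv, List.mem_map_of_mem hvq⟩
      · subst hk₁; exact absurd hk₂ (by simp)
      · subst hk₁; exact absurd hk₂ (by simp)
      · -- both start at a subdivision vertex
        subst hk₁
        have hee : e₁ = e₂ := by
          have := hk₂
          simpa using this
        subst hee
        obtain ⟨hm₁, x, y, rfl, hbixy⟩ := hedge₁
        obtain ⟨hm₂, -⟩ := hedge₂
        have hside : i₁ = i₂ ∨ Bi i₁ i₂ := by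
          rcases Sym2.mem_iff.1 hm₁ with rfl | rfl <;>
            rcases Sym2.mem_iff.1 hm₂ with h | h
          · exact Or.inl h.symm
          · exact h ▸ Or.inr hbixy
          · exact h ▸ Or.inr (hBi _ _ hbixy)
          · exact Or.inl h.symm
        rcases hmix a ha b hb q₁ q₂ i₁ i₂ hq₁ hq₂ hside with ⟨v, hv, hvq⟩ | ⟨v, hv, hvq⟩
        · exact Or.inl ⟨Sum.inl v, Finset.mem_image_of_mem _ hv,
            List.mem_cons_of_mem _ (List.mem_map_of_mem hvq)⟩
        · exact Or.inr ⟨Sum.inl v, Finset.mem_image_of_mem _ hv,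
            List.mem_cons_of_mem _ (List.mem_map_of_mem hvq)⟩
  · rintro ⟨DL, DR, hcard, hsep⟩
    obtain ⟨CL, CR, hc, hs⟩ := reduce _ DL DR rfl hsep
    refine ⟨CL, CR, by omega, ?_⟩
    intro a ha b hb PL PR sL sR hPL hPR hside
    rcases hside with rfl | hbi
    · rcases hs (Sum.inl a) (Finset.mem_image_of_mem _ ha)
          (Sum.inl b) (Finset.mem_image_of_mem _ hb)
          (PL.map Sum.inl) (PR.map Sum.inl)
          ⟨Sum.inl sL, isPath_map_inl hPL, isPath_map_inl hPR⟩ with ⟨v, hv, hvP⟩ | ⟨v, hv, hvP⟩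
      · obtain ⟨u, hu, rfl⟩ := Finset.mem_image.1 hv
        obtain ⟨w, hw, hwu⟩ := List.mem_map.1 hvP
        exact Or.inl ⟨u, hu, by rwa [← Sum.inl_injective hwu]⟩
      · obtain ⟨u, hu, rfl⟩ := Finset.mem_image.1 hv
        obtain ⟨w, hw, hwu⟩ := List.mem_map.1 hvP
        exact Or.inr ⟨u, hu, by rwa [← Sum.inl_injective hwu]⟩
    · have hedgeL : CanonDAG Dir Bi (Sum.inr s(sL, sR)) (Sum.inl sL) :=
        ⟨Sym2.mem_iff.2 (Or.inl rfl), sL, sR, rfl, hbi⟩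
      have hedgeR : CanonDAG Dir Bi (Sum.inr s(sL, sR)) (Sum.inl sR) :=
        ⟨Sym2.mem_iff.2 (Or.inr rfl), sL, sR, rfl, hbi⟩
      rcases hs (Sum.inl a) (Finset.mem_image_of_mem _ ha)
          (Sum.inl b) (Finset.mem_image_of_mem _ hb)
          (Sum.inr s(sL, sR) :: PL.map Sum.inl) (Sum.inr s(sL, sR) :: PR.map Sum.inl)
          ⟨Sum.inr s(sL, sR), isPath_cons_inr hedgeL hPL, isPath_cons_inr hedgeR hPR⟩
        with ⟨v, hv, hvP⟩ | ⟨v, hv, hvP⟩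
      · obtain ⟨u, hu, rfl⟩ := Finset.mem_image.1 hv
        rcases List.mem_cons.1 hvP with h | h
        · exact absurd h (by simp)
        · obtain ⟨w, hw, hwu⟩ := List.mem_map.1 h
          exact Or.inl ⟨u, hu, by rwa [← Sum.inl_injective hwu]⟩
      · obtain ⟨u, hu, rfl⟩ := Finset.mem_image.1 hv
        rcases List.mem_cons.1 hvP with h | h
        · exact absurd h (by simp)
        · obtain ⟨w, hw, hwu⟩ := List.mem_map.1 h
          exact Or.inr ⟨u, hu, by rwa [← Sum.inl_injective hwu]⟩
end

section
/- Let $G$ be a mixed graph with directed and undirected edges, with generic parameter matrices $\Lambda$ (directed edges) and $K$ (undirected part), and $\Sigma = \Lambda^{-\top}K^{-1}\Lambda^{-1}$. Let $A, B$ be vertex sets with $\#A = \#B = r$. If every system of $r$ treks from $A$ to $B$ in $G$ has a sided crossing, then for every pair of subsets $S, T \subseteq V(G)$ with $\#S = \#T = r$, the product $\det(\Lambda^{-\top})_{A,S}\cdot \det(K^{-1})_{S,T}\cdot \det(\Lambda^{-1})_{T,B}$ is identically zero; consequently $\det\Sigma_{A,B} = 0$ by the Cauchy–Binet expansion. -/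
open Matrix

/-- The minor of an `m × m` matrix with rows indexed by `A` and columns by `B`
(both listed in increasing order); junk value `0` if `#A ≠ #B`. -/
noncomputable def subdet {m : ℕ} {R : Type*} [CommRing R]
    (M : Matrix (Fin m) (Fin m) R) (A B : Finset (Fin m)) : R :=
  if h : A.card = B.card then
    (M.submatrix (fun i : Fin A.card => ((A.orderIsoOfFin rfl) i).1)
      (fun i : Fin A.card => ((B.orderIsoOfFin h.symm) i).1)).det
  else 0

/-- The parameter ring: a variable for each directed edge, each undirected edge,
and each vertex (the entries of `D⁻¹`). -/
abbrev MixRing (m : ℕ) : Type :=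
  MvPowerSeries ((Fin m × Fin m) ⊕ (Sym2 (Fin m) ⊕ Fin m)) ℝ

/-- `Λ = I - L`, with `L` the generic matrix of the directed edges. -/
noncomputable def LamMix (m : ℕ) (Dir : Fin m → Fin m → Prop) [DecidableRel Dir] :
    Matrix (Fin m) (Fin m) (MixRing m) :=
  1 - Matrix.of (fun a b =>
    if Dir a b then MvPowerSeries.X (Sum.inl (a, b)) else 0)

/-- `K⁻¹ = D⁻¹ (I - Ψ)⁻¹ D⁻¹`: the generic inverse concentration matrix of the
undirected part, with `Ψ` the symmetric matrix of undirected-edge indeterminates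
and `D⁻¹` a generic diagonal matrix. -/
noncomputable def KinvMix (m : ℕ) (Und : Fin m → Fin m → Prop) [DecidableRel Und] :
    Matrix (Fin m) (Fin m) (MixRing m) :=
  Matrix.diagonal (fun i => MvPowerSeries.X (Sum.inr (Sum.inr i)))
    * ((1 : Matrix (Fin m) (Fin m) (MixRing m)) - Matrix.of (fun i j =>
        if Und i j then MvPowerSeries.X (Sum.inr (Sum.inl s(i, j))) else 0))⁻¹
    * Matrix.diagonal (fun i => MvPowerSeries.X (Sum.inr (Sum.inr i)))

/-- Existence of a pairwise vertex-disjoint `E`-walk system from `X` into `Y`. -/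
def SysEx {m : ℕ} (E : Fin m → Fin m → Prop) (X Y : Finset (Fin m)) : Prop :=
  ∃ (P : Fin m → List (Fin m)) (e : Fin m → Fin m),
    (∀ s ∈ X, IsPath E (P s) s (e s) ∧ e s ∈ Y) ∧
    (∀ s ∈ X, ∀ t ∈ X, s ≠ t → ∀ v, v ∈ P s → v ∉ P t)

lemma sysEx_of_fun {m : ℕ} (E : Fin m → Fin m → Prop) (X Y : Finset (Fin m))
    (f : Fin m → Fin m)
    (hf1 : ∀ v, v ∉ Y → f v ∉ X)
    (hf2 : ∀ v w, v ∉ Y → w ∉ Y → f v = f w → v = w)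
    (hf3 : ∀ v, v ∉ Y → v = f v ∨ E v (f v)) :
    SysEx E X Y := by
  classical
  -- existence of a stopping time for `s ∈ X`
  have hex : ∀ s ∈ X, ∃ k, f^[k] s ∈ Y := by
    intro s hsX
    by_contra h
    push_neg at h
    have key : ∀ a b, f^[a] s = f^[a + (b + 1)] s → False := by
      intro a
      induction a with
      | zero =>
        intro b hb
        simp only [Function.iterate_zero, id_eq, Nat.zero_add] at hb
        rw [Function.iterate_succ_apply'] at hb
        exact hf1 _ (h b) (hb ▸ hsX)
      | succ a ih =>
        intro b hb
        have : a + 1 + (b + 1) = (a + (b + 1)) + 1 := by omega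
        rw [this, Function.iterate_succ_apply', Function.iterate_succ_apply'] at hb
        exact ih b (hf2 _ _ (h a) (h _) hb)
    obtain ⟨a, b, hab, he⟩ := Finite.exists_ne_map_eq_of_infinite (fun k : ℕ => f^[k] s)
    rcases Nat.lt_or_ge a b with hlt | hge
    · obtain ⟨c, rfl⟩ : ∃ c, b = a + (c + 1) := ⟨b - a - 1, by omega⟩
      exact key a c he
    · have hlt : b < a := lt_of_le_of_ne hge (Ne.symm hab)
      obtain ⟨c, rfl⟩ : ∃ c, a = b + (c + 1) := ⟨a - b - 1, by omega⟩
      exact key b c he.symm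
  -- the walk and endpoint functions
  refine ⟨fun s => if hs : ∃ k, f^[k] s ∈ Y then
      (List.range (Nat.find hs + 1)).map (fun i => f^[i] s) else [],
    fun s => if hs : ∃ k, f^[k] s ∈ Y then f^[Nat.find hs] s else s, ?_, ?_⟩
  · intro s hsX
    have hs := hex s hsX
    simp only [dif_pos hs]
    set k := Nat.find hs with hk
    have hkY : f^[k] s ∈ Y := Nat.find_spec hs
    refine ⟨⟨?_, ?_, ?_⟩, hkY⟩
    · rw [List.range_succ_eq_map, List.map_cons]
      simp
    · rw [List.range_succ, List.map_append, List.map_cons, List.map_nil,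
        List.getLast?_concat]
    · change List.IsChain E _
      rw [List.isChain_map, List.isChain_range_succ]
      intro i hi
      have hiY : f^[i] s ∉ Y := Nat.find_min hs hi
      rcases hf3 _ hiY with heq | hE
      · exfalso
        have hfix : ∀ j, f^[i + j] s = f^[i] s := by
          intro j
          induction j with
          | zero => rfl
          | succ j ih =>
            have : i + (j + 1) = (i + j) + 1 := by omega
            rw [this, Function.iterate_succ_apply', ih, ← heq]
        have : f^[k] s = f^[i] s := by
          have := hfix (k - i)
          rwa [Nat.add_sub_cancel' (le_of_lt hi)] at this
        exact hiY (this ▸ hkY)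
      · rw [Function.iterate_succ_apply']
        exact hE
  · intro s hsX t htX hst v hvs hvt
    have hs := hex s hsX
    have ht := hex t htX
    simp only [dif_pos hs] at hvs
    simp only [dif_pos ht] at hvt
    simp only [List.mem_map, List.mem_range, Nat.lt_succ_iff] at hvs hvt
    obtain ⟨a, ha, rfl⟩ := hvs
    obtain ⟨b, hb, hab⟩ := hvt
    -- show s = t
    apply hst
    induction a generalizing b with
    | zero =>
      cases b with
      | zero => simpa using hab.symm
      | succ b =>
        exfalso
        rw [Function.iterate_succ_apply'] at hab
        have hbY : f^[b] t ∉ Y := Nat.find_min ht (by omega)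
        exact hf1 _ hbY (by rw [hab]; simpa using hsX)
    | succ a ih =>
      cases b with
      | zero =>
        exfalso
        rw [Function.iterate_succ_apply'] at hab
        have haY : f^[a] s ∉ Y := Nat.find_min hs (by omega)
        apply hf1 _ haY
        rw [← hab]
        simpa using htX
      | succ b =>
        rw [Function.iterate_succ_apply', Function.iterate_succ_apply'] at hab
        have haY : f^[a] s ∉ Y := Nat.find_min hs (by omega)
        have hbY : f^[b] t ∉ Y := Nat.find_min ht (by omega)
        exact ih (by omega) b (by omega) (hf2 _ _ hbY haY hab)

lemma det_compl_vanish {R : Type*} [CommRing R] {m k : ℕ}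
    (E : Fin m → Fin m → Prop) (G : Matrix (Fin m) (Fin m) R)
    (hG : ∀ v w, G v w ≠ 0 → v = w ∨ E v w)
    (X Y : Finset (Fin m)) (hYc : Yᶜ.card = k) (hXc : Xᶜ.card = k)
    (hNO : ¬ SysEx E X Y) :
    (G.submatrix (fun i : Fin k => ((Yᶜ.orderIsoOfFin hYc) i).1)
       (fun i : Fin k => ((Xᶜ.orderIsoOfFin hXc) i).1)).det = 0 := by
  classical
  rw [Matrix.det_apply]
  apply Finset.sum_eq_zero
  intro σ _
  suffices h : (∏ i, G ((Yᶜ.orderIsoOfFin hYc) (σ i)).1 ((Xᶜ.orderIsoOfFin hXc) i).1) = 0 by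
    simp only [Matrix.submatrix_apply, h, smul_zero]
  by_contra hp
  have hfac : ∀ i, G ((Yᶜ.orderIsoOfFin hYc) (σ i)).1 ((Xᶜ.orderIsoOfFin hXc) i).1 ≠ 0 := by
    intro i h0
    exact hp (Finset.prod_eq_zero (Finset.mem_univ i) h0)
  apply hNO
  apply sysEx_of_fun E X Y
    (fun v => if hv : v ∈ Yᶜ then
      ((Xᶜ.orderIsoOfFin hXc) (σ.symm ((Yᶜ.orderIsoOfFin hYc).symm ⟨v, hv⟩))).1 else v)
  · intro v hv
    have hv' : v ∈ Yᶜ := Finset.mem_compl.2 hv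
    simp only [dif_pos hv']
    exact Finset.mem_compl.1 ((Xᶜ.orderIsoOfFin hXc) _).2
  · intro v w hv hw hvw
    have hv' : v ∈ Yᶜ := Finset.mem_compl.2 hv
    have hw' : w ∈ Yᶜ := Finset.mem_compl.2 hw
    simp only [dif_pos hv', dif_pos hw'] at hvw
    have h1 := Subtype.val_injective hvw
    have h2 := (Xᶜ.orderIsoOfFin hXc).injective h1
    have h3 := σ.symm.injective h2
    have h4 := (Yᶜ.orderIsoOfFin hYc).symm.injective h3
    exact congrArg Subtype.val h4
  · intro v hv
    have hv' : v ∈ Yᶜ := Finset.mem_compl.2 hv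
    simp only [dif_pos hv']
    set j := (Yᶜ.orderIsoOfFin hYc).symm ⟨v, hv'⟩ with hj
    have hvj : ((Yᶜ.orderIsoOfFin hYc) (σ (σ.symm j))).1 = v := by
      rw [Equiv.apply_symm_apply]
      rw [hj]
      rw [OrderIso.apply_symm_apply]
    have := hfac (σ.symm j)
    rw [hvj] at this
    exact hG _ _ this

lemma det_unit_cols {R : Type*} [CommRing R] {m k : ℕ}
    (P : Matrix (Fin m) (Fin m) R) (I J : Finset (Fin m))
    (hI : I.card = k) (hJ : J.card = k)
    (φe : {x // x ∈ Jᶜ} ≃ {x // x ∈ Iᶜ})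
    (hcol : ∀ (j : {x : Fin m // x ∈ Jᶜ}) (x : Fin m),
      P x j.1 = if x = (φe j).1 then 1 else 0) :
    ∃ ε : R, IsUnit ε ∧
      P.det = ε * (P.submatrix (fun i : Fin k => ((I.orderIsoOfFin hI) i).1)
        (fun i : Fin k => ((J.orderIsoOfFin hJ) i).1)).det := by
  classical
  set cI : {x : Fin m // x ∈ Iᶜ} ≃ {x : Fin m // ¬ x ∈ I} :=
    Equiv.subtypeEquivRight (fun x => Finset.mem_compl) with hcI
  set cJ : {x : Fin m // x ∈ Jᶜ} ≃ {x : Fin m // ¬ x ∈ J} :=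
    Equiv.subtypeEquivRight (fun x => Finset.mem_compl) with hcJ
  set eI : ({x : Fin m // x ∈ I} ⊕ {x : Fin m // x ∈ Iᶜ}) ≃ Fin m :=
    (Equiv.sumCongr (Equiv.refl _) cI).trans (Equiv.sumCompl (· ∈ I)) with heI
  set eJ : ({x : Fin m // x ∈ J} ⊕ {x : Fin m // x ∈ Jᶜ}) ≃ Fin m :=
    (Equiv.sumCongr (Equiv.refl _) cJ).trans (Equiv.sumCompl (· ∈ J)) with heJ
  set ψe : {x : Fin m // x ∈ J} ≃ {x : Fin m // x ∈ I} :=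
    (J.orderIsoOfFin hJ).toEquiv.symm.trans (I.orderIsoOfFin hI).toEquiv with hψe
  set eC : ({x : Fin m // x ∈ I} ⊕ {x : Fin m // x ∈ Iᶜ}) ≃ Fin m :=
    (Equiv.sumCongr ψe.symm φe.symm).trans eJ with heC
  have heIl : ∀ i, eI (Sum.inl i) = i.1 := by intro i; simp [heI]
  have heIr : ∀ x, eI (Sum.inr x) = x.1 := by intro x; simp [heI, hcI]
  have heCl : ∀ j, eC (Sum.inl j) = (ψe.symm j).1 := by intro j; simp [heC, heJ]
  have heCr : ∀ y, eC (Sum.inr y) = (φe.symm y).1 := by intro y; simp [heC, heJ, hcJ]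
  set Q := P.submatrix eI eC with hQdef
  set τ : Equiv.Perm ({x : Fin m // x ∈ I} ⊕ {x : Fin m // x ∈ Iᶜ}) :=
    eC.trans eI.symm with hτ
  have hQ1 : Q = (P.submatrix eI eI).submatrix id τ := by
    ext i j
    simp [hQdef, hτ, Matrix.submatrix_apply]
  have hdetQ : Q.det = (Equiv.Perm.sign τ : ℤ) * P.det := by
    rw [hQ1, Matrix.det_permute', Matrix.det_submatrix_equiv_self]
  -- block structure
  set QAA : Matrix {x : Fin m // x ∈ I} {x : Fin m // x ∈ I} R :=
    Matrix.of fun i j => P i.1 ((ψe.symm j).1) with hQAA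
  have hQ2 : Q = Matrix.fromBlocks QAA 0
      (Matrix.of fun (x : {x : Fin m // x ∈ Iᶜ}) (j : {x : Fin m // x ∈ I}) => P x.1 ((ψe.symm j).1))
      (1 : Matrix {x : Fin m // x ∈ Iᶜ} {x : Fin m // x ∈ Iᶜ} R) := by
    ext i j
    rcases i with i | i <;> rcases j with j | j
    · simp [hQdef, Matrix.submatrix_apply, heIl, heCl, hQAA]
    · have := hcol (φe.symm j) i.1
      rw [Equiv.apply_symm_apply] at this
      have hne : i.1 ≠ j.1 := by
        intro h
        have := j.2
        rw [← h] at this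
        exact (Finset.mem_compl.1 this) i.2
      simp [hQdef, Matrix.submatrix_apply, heIl, heCr, this, hne]
    · simp [hQdef, Matrix.submatrix_apply, heIr, heCl]
    · have := hcol (φe.symm j) i.1
      rw [Equiv.apply_symm_apply] at this
      rw [hQdef, Matrix.submatrix_apply, heIr, heCr, this, Matrix.fromBlocks_apply₂₂,
        Matrix.one_apply]
      simp only [Subtype.ext_iff]
  have hdetQ2 : Q.det = QAA.det := by
    rw [hQ2, Matrix.det_fromBlocks_zero₁₂, Matrix.det_one, mul_one]
  have hdetQAA : QAA.det = (P.submatrix (fun i : Fin k => ((I.orderIsoOfFin hI) i).1)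
      (fun i : Fin k => ((J.orderIsoOfFin hJ) i).1)).det := by
    rw [← Matrix.det_submatrix_equiv_self (I.orderIsoOfFin hI).toEquiv QAA]
    congr 1
    ext a b
    simp only [Matrix.submatrix_apply, hQAA, Matrix.of_apply]
    congr 2
    simp [hψe]
  -- combine
  refine ⟨(Equiv.Perm.sign τ : ℤ), ?_, ?_⟩
  · rcases Int.units_eq_one_or (Equiv.Perm.sign τ) with h | h <;> rw [h] <;> simp
  · have : ((Equiv.Perm.sign τ : ℤ) : R) * Q.det = P.det := by
      rw [hdetQ]
      rcases Int.units_eq_one_or (Equiv.Perm.sign τ) with h | h <;> rw [h] <;> push_cast <;> ring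
    rw [← this, hdetQ2, hdetQAA]

lemma jacobi_minor {R : Type*} [CommRing R] {m k k' : ℕ}
    (M : Matrix (Fin m) (Fin m) R) (hM : IsUnit M.det)
    (S T : Finset (Fin m)) (hS : S.card = k) (hT : T.card = k)
    (hSc : Sᶜ.card = k') (hTc : Tᶜ.card = k') :
    ∃ u : R, IsUnit u ∧
      u * (M⁻¹.submatrix (fun i : Fin k => ((S.orderIsoOfFin hS) i).1)
            (fun i : Fin k => ((T.orderIsoOfFin hT) i).1)).det
        = (M.submatrix (fun i : Fin k' => ((Tᶜ.orderIsoOfFin hTc) i).1)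
            (fun i : Fin k' => ((Sᶜ.orderIsoOfFin hSc) i).1)).det := by
  classical
  set g : Fin m → Fin m := fun j => if hj : j ∈ Tᶜ then
      ((Sᶜ.orderIsoOfFin hSc) ((Tᶜ.orderIsoOfFin hTc).symm ⟨j, hj⟩)).1 else j with hg
  set N : Matrix (Fin m) (Fin m) R := fun x j =>
      if j ∈ T then M⁻¹ x j else if x = g j then 1 else 0 with hN
  set φe₁ : {x : Fin m // x ∈ Tᶜ} ≃ {x : Fin m // x ∈ Sᶜ} :=
    (Tᶜ.orderIsoOfFin hTc).toEquiv.symm.trans (Sᶜ.orderIsoOfFin hSc).toEquiv with hφe₁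
  have hgj : ∀ (j : {x : Fin m // x ∈ Tᶜ}), g j.1 = (φe₁ j).1 := by
    intro j
    simp only [hg, dif_pos j.2, hφe₁]
    rfl
  -- first application: det N
  obtain ⟨ε₁, hε₁u, hε₁⟩ := det_unit_cols N S T hS hT φe₁ (by
    intro j x
    have hjT : ¬ j.1 ∈ T := Finset.mem_compl.1 j.2
    simp only [hN, if_neg hjT, hgj j])
  have hNsub : N.submatrix (fun i : Fin k => ((S.orderIsoOfFin hS) i).1)
      (fun i : Fin k => ((T.orderIsoOfFin hT) i).1)
      = M⁻¹.submatrix (fun i : Fin k => ((S.orderIsoOfFin hS) i).1)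
      (fun i : Fin k => ((T.orderIsoOfFin hT) i).1) := by
    ext a b
    rw [Matrix.submatrix_apply]
    simp only [Matrix.submatrix_apply, hN, if_pos ((T.orderIsoOfFin hT) b).2]
  -- compute M * N
  have hMN : ∀ x j, (M * N) x j = if j ∈ T then (1 : Matrix (Fin m) (Fin m) R) x j
      else M x (g j) := by
    intro x j
    by_cases hj : j ∈ T
    · have h1 := congrFun (congrFun (Matrix.mul_nonsing_inv M hM) x) j
      rw [Matrix.mul_apply] at h1
      rw [Matrix.mul_apply, if_pos hj, ← h1]
      apply Finset.sum_congr rfl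
      intro y _
      simp [hN, if_pos hj]
    · rw [Matrix.mul_apply, if_neg hj]
      have : ∀ y, M x y * N y j = if y = g j then M x y else 0 := by
        intro y
        simp only [hN, if_neg hj]
        by_cases hy : y = g j <;> simp [hy]
      simp only [this]
      rw [Finset.sum_ite_eq' Finset.univ (g j) (fun y => M x y)]
      simp
  -- second application: det (M * N)
  set φe₂ : {x : Fin m // x ∈ Tᶜᶜ} ≃ {x : Fin m // x ∈ Tᶜᶜ} := Equiv.refl _ with hφe₂
  obtain ⟨ε₂, hε₂u, hε₂⟩ := det_unit_cols (M * N) Tᶜ Tᶜ hTc hTc φe₂ (by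
    intro j x
    have hjT : j.1 ∈ T := by simpa using j.2
    rw [hMN, if_pos hjT]
    simp [Matrix.one_apply, hφe₂])
  have hMNsub : (M * N).submatrix (fun i : Fin k' => ((Tᶜ.orderIsoOfFin hTc) i).1)
      (fun i : Fin k' => ((Tᶜ.orderIsoOfFin hTc) i).1)
      = M.submatrix (fun i : Fin k' => ((Tᶜ.orderIsoOfFin hTc) i).1)
      (fun i : Fin k' => ((Sᶜ.orderIsoOfFin hSc) i).1) := by
    ext a b
    rw [Matrix.submatrix_apply, hMN, if_neg (Finset.mem_compl.1 ((Tᶜ.orderIsoOfFin hTc) b).2)]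
    rw [Matrix.submatrix_apply]
    congr 1
    rw [hgj ((Tᶜ.orderIsoOfFin hTc) b)]
    simp [hφe₁]
  -- combine
  obtain ⟨u₂, hu₂⟩ := hε₂u
  refine ⟨(↑u₂⁻¹ : R) * (M.det * ε₁), ?_, ?_⟩
  · exact (u₂⁻¹.isUnit).mul (hM.mul hε₁u)
  · have h1 : M.det * N.det = ε₂ * (M.submatrix (fun i : Fin k' => ((Tᶜ.orderIsoOfFin hTc) i).1)
        (fun i : Fin k' => ((Sᶜ.orderIsoOfFin hSc) i).1)).det := by
      rw [← Matrix.det_mul, hε₂, hMNsub]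
    rw [hε₁, hNsub] at h1
    have h2 : (↑u₂⁻¹ : R) * ε₂ = 1 := by
      rw [← hu₂]
      exact Units.inv_mul u₂
    calc (↑u₂⁻¹ : R) * (M.det * ε₁) * (M⁻¹.submatrix (fun i : Fin k => ((S.orderIsoOfFin hS) i).1)
            (fun i : Fin k => ((T.orderIsoOfFin hT) i).1)).det
        = (↑u₂⁻¹ : R) * (M.det * (ε₁ * (M⁻¹.submatrix (fun i : Fin k => ((S.orderIsoOfFin hS) i).1)
            (fun i : Fin k => ((T.orderIsoOfFin hT) i).1)).det)) := by ring
      _ = (↑u₂⁻¹ : R) * (ε₂ * (M.submatrix (fun i : Fin k' => ((Tᶜ.orderIsoOfFin hTc) i).1)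
            (fun i : Fin k' => ((Sᶜ.orderIsoOfFin hSc) i).1)).det) := by rw [← h1]
      _ = _ := by rw [← mul_assoc, h2, one_mul]

lemma cauchy_binet {R : Type*} [CommRing R] {r m : ℕ}
    (P : Matrix (Fin r) (Fin m) R) (Q : Matrix (Fin m) (Fin r) R) :
    (P * Q).det = ∑ S ∈ (Finset.powersetCard r (Finset.univ : Finset (Fin m))).attach,
      (P.submatrix id (fun i : Fin r =>
        ((S.1.orderIsoOfFin (Finset.mem_powersetCard_univ.mp S.2)) i).1)).det
      * (Q.submatrix (fun i : Fin r =>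
        ((S.1.orderIsoOfFin (Finset.mem_powersetCard_univ.mp S.2)) i).1) id).det := by
  classical
  have step1 : (P * Q).det = ∑ p : Fin r → Fin m,
      (∏ i, Q (p i) i) * (P.submatrix id p).det := by
    rw [Matrix.det_apply']
    simp only [Matrix.mul_apply]
    calc ∑ σ : Equiv.Perm (Fin r), ((Equiv.Perm.sign σ : ℤ) : R) * ∏ i, ∑ k, P (σ i) k * Q k i
        = ∑ σ : Equiv.Perm (Fin r), ∑ p : Fin r → Fin m,
            ((Equiv.Perm.sign σ : ℤ) : R) * ∏ i, P (σ i) (p i) * Q (p i) i := by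
          apply Finset.sum_congr rfl; intro σ _
          rw [Finset.prod_univ_sum, Finset.mul_sum, Fintype.piFinset_univ]
      _ = ∑ p : Fin r → Fin m, ∑ σ : Equiv.Perm (Fin r),
            ((Equiv.Perm.sign σ : ℤ) : R) * ∏ i, P (σ i) (p i) * Q (p i) i :=
          Finset.sum_comm
      _ = ∑ p : Fin r → Fin m, (∏ i, Q (p i) i) * (P.submatrix id p).det := by
          apply Finset.sum_congr rfl; intro p _
          rw [Matrix.det_apply', Finset.mul_sum]
          apply Finset.sum_congr rfl; intro σ _
          simp only [Matrix.submatrix_apply, id_eq, Finset.prod_mul_distrib]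
          ring
  rw [step1]
  rw [← Finset.sum_filter_of_ne (p := fun p : Fin r → Fin m => Function.Injective p)
    (by
      intro p _ hne
      by_contra hni
      apply hne
      rw [Function.not_injective_iff] at hni
      obtain ⟨a, b, hne', hab⟩ := hni
      rw [Matrix.det_zero_of_column_eq hab (fun k => by simp [Matrix.submatrix_apply, hne']),
        mul_zero])]
  have rhs : ∀ S : {x // x ∈ Finset.powersetCard r (Finset.univ : Finset (Fin m))},
      (P.submatrix id (fun i : Fin r =>
        ((S.1.orderIsoOfFin (Finset.mem_powersetCard_univ.mp S.2)) i).1)).det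
      * (Q.submatrix (fun i : Fin r =>
        ((S.1.orderIsoOfFin (Finset.mem_powersetCard_univ.mp S.2)) i).1) id).det
      = ∑ σ : Equiv.Perm (Fin r),
          (P.submatrix id (fun i : Fin r =>
            ((S.1.orderIsoOfFin (Finset.mem_powersetCard_univ.mp S.2)) i).1)).det
          * (((Equiv.Perm.sign σ : ℤ) : R) *
            ∏ i, Q ((S.1.orderIsoOfFin (Finset.mem_powersetCard_univ.mp S.2)) (σ i)).1 i) := by
    intro S
    rw [← Finset.mul_sum]
    congr 1
    rw [Matrix.det_apply']
    apply Finset.sum_congr rfl; intro σ _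
    simp [Matrix.submatrix_apply]
  simp only [rhs]
  rw [← Finset.sum_product']
  refine (Finset.sum_bij
    (i := fun (x : {x // x ∈ Finset.powersetCard r (Finset.univ : Finset (Fin m))} × Equiv.Perm (Fin r)) _ =>
      (fun i : Fin r => ((x.1.1.orderIsoOfFin (Finset.mem_powersetCard_univ.mp x.1.2)) (x.2 i)).1))
    ?_ ?_ ?_ ?_).symm
  · -- maps into the filter
    rintro ⟨S, σ⟩ -
    simp only [Finset.mem_filter, Finset.mem_univ, true_and]
    intro a b hab
    simp only at hab
    exact σ.injective ((S.1.orderIsoOfFin _).injective (Subtype.val_injective hab))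
  · -- injective
    intro x₁ hx₁ x₂ hx₂ h
    obtain ⟨⟨S, hS⟩, σ⟩ := x₁
    obtain ⟨⟨S', hS'⟩, σ'⟩ := x₂
    have hfun := congrFun h
    simp only at hfun
    have hSS : S = S' := by
      ext v
      constructor
      · intro hv
        have : v = ((S.orderIsoOfFin (Finset.mem_powersetCard_univ.mp hS))
            (σ ((σ.symm ((S.orderIsoOfFin (Finset.mem_powersetCard_univ.mp hS)).symm ⟨v, hv⟩))))).1 := by
          simp
        rw [this, hfun]
        exact ((S'.orderIsoOfFin (Finset.mem_powersetCard_univ.mp hS')) _).2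
      · intro hv
        have : v = ((S'.orderIsoOfFin (Finset.mem_powersetCard_univ.mp hS'))
            (σ' ((σ'.symm ((S'.orderIsoOfFin (Finset.mem_powersetCard_univ.mp hS')).symm ⟨v, hv⟩))))).1 := by
          simp
        rw [this, ← hfun]
        exact ((S.orderIsoOfFin (Finset.mem_powersetCard_univ.mp hS)) _).2
    subst hSS
    have hσ : σ = σ' := by
      ext i
      have := hfun i
      exact Fin.val_injective (congrArg Fin.val
        ((S.orderIsoOfFin (Finset.mem_powersetCard_univ.mp hS)).injective
          (Subtype.val_injective this) : σ i = σ' i)) ▸ rfl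
    rw [hσ]
  · -- surjective
    intro p hp
    have hpinj : Function.Injective p := (Finset.mem_filter.mp hp).2
    have hcard : (Finset.image p Finset.univ).card = r := by
      rw [Finset.card_image_of_injective _ hpinj, Finset.card_univ, Fintype.card_fin]
    have hmem : Finset.image p Finset.univ ∈ Finset.powersetCard r (Finset.univ : Finset (Fin m)) :=
      Finset.mem_powersetCard_univ.mpr hcard
    have hmem' : ∀ i, p i ∈ Finset.image p Finset.univ := by
      intro i; exact Finset.mem_image_of_mem p (Finset.mem_univ i)
    set σfun : Fin r → Fin r := fun i =>
      ((Finset.image p Finset.univ).orderIsoOfFin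
        (Finset.mem_powersetCard_univ.mp hmem)).symm ⟨p i, hmem' i⟩ with hσfun
    have hσinj : Function.Injective σfun := by
      intro a b hab
      apply hpinj
      have := ((Finset.image p Finset.univ).orderIsoOfFin
        (Finset.mem_powersetCard_univ.mp hmem)).symm.injective.eq_iff.mp hab
      exact congrArg Subtype.val this
    refine ⟨⟨⟨Finset.image p Finset.univ, hmem⟩,
      Equiv.ofBijective σfun (Finite.injective_iff_bijective.mp hσinj)⟩,
      Finset.mem_product.mpr ⟨Finset.mem_attach _ _, Finset.mem_univ _⟩, ?_⟩
    funext i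
    simp only [Equiv.ofBijective_apply, hσfun]
    rw [OrderIso.apply_symm_apply]
  · -- summand equality
    intro x hx
    obtain ⟨⟨S, hS⟩, σ⟩ := x
    have hsub : P.submatrix id (fun i : Fin r =>
        ((S.orderIsoOfFin (Finset.mem_powersetCard_univ.mp hS)) (σ i)).1)
        = (P.submatrix id (fun i : Fin r =>
          ((S.orderIsoOfFin (Finset.mem_powersetCard_univ.mp hS)) i).1)).submatrix id σ := by
      ext a b
      simp [Matrix.submatrix_apply]
    rw [hsub, Matrix.det_permute']
    ring

lemma list_mem_of_head? {α : Type*} {l : List α} {a : α} (h : l.head? = some a) : a ∈ l := by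
  cases l with
  | nil => simp at h
  | cons x t =>
    simp only [List.head?_cons, Option.some.injEq] at h
    rw [← h]
    exact List.mem_cons_self

lemma list_mem_of_getLast? {α : Type*} {l : List α} {a : α} (h : l.getLast? = some a) : a ∈ l := by
  have : a ∈ l.getLast? := by rw [h]; rfl
  obtain ⟨h', rfl⟩ := List.mem_getLast?_eq_getLast this
  exact List.getLast_mem h'

section Main

variable {m : ℕ} (Dir Und : Fin m → Fin m → Prop) [DecidableRel Dir] [DecidableRel Und]

/-- The matrix `I - Ψ` of the undirected part. -/
noncomputable def PsiM (m : ℕ) (Und : Fin m → Fin m → Prop) [DecidableRel Und] :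
    Matrix (Fin m) (Fin m) (MixRing m) :=
  (1 : Matrix (Fin m) (Fin m) (MixRing m)) - Matrix.of (fun i j =>
    if Und i j then MvPowerSeries.X (Sum.inr (Sum.inl s(i, j))) else 0)

lemma kinv_eq : KinvMix m Und =
    Matrix.diagonal (fun i => MvPowerSeries.X (Sum.inr (Sum.inr i)))
    * (PsiM m Und)⁻¹
    * Matrix.diagonal (fun i => MvPowerSeries.X (Sum.inr (Sum.inr i))) := rfl

lemma lam_det_one (hDir : ∀ i j, Dir i j → i < j) : (LamMix m Dir).det = 1 := by
  rw [Matrix.det_of_upperTriangular (M := LamMix m Dir)]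
  · apply Finset.prod_eq_one
    intro i _
    have : ¬ Dir i i := fun h => lt_irrefl i (hDir i i h)
    simp [LamMix, Matrix.one_apply, this]
  · intro i j hij
    have h1 : i ≠ j := fun h => absurd (h ▸ hij) (lt_irrefl _)
    have h2 : ¬ Dir i j := fun h => absurd (hDir i j h) (not_lt.mpr (le_of_lt hij))
    simp [LamMix, Matrix.one_apply, h1, h2]

lemma lam_unit (hDir : ∀ i j, Dir i j → i < j) : IsUnit (LamMix m Dir).det := by
  rw [lam_det_one Dir hDir]; exact isUnit_one

lemma lam_entry (v w : Fin m) (h : (LamMix m Dir) v w ≠ 0) : v = w ∨ Dir v w := by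
  by_cases h1 : v = w
  · exact Or.inl h1
  by_cases h2 : Dir v w
  · exact Or.inr h2
  exfalso
  apply h
  simp [LamMix, Matrix.one_apply, h1, h2]

lemma psi_unit : IsUnit (PsiM m Und).det := by
  rw [MvPowerSeries.isUnit_iff_constantCoeff]
  rw [RingHom.map_det, RingHom.mapMatrix_apply]
  have : (PsiM m Und).map
      (MvPowerSeries.constantCoeff (σ := (Fin m × Fin m) ⊕ (Sym2 (Fin m) ⊕ Fin m)) (R := ℝ)) = 1 := by
    ext i j
    by_cases h : i = j <;>
      simp [PsiM, Matrix.map_apply, Matrix.one_apply, h, Matrix.sub_apply, apply_ite,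
        MvPowerSeries.constantCoeff_X]
  rw [this, Matrix.det_one]
  exact isUnit_one

lemma psi_entry (v w : Fin m) (h : PsiM m Und v w ≠ 0) :
    v = w ∨ Und v w := by
  by_cases h1 : v = w
  · exact Or.inl h1
  by_cases h2 : Und v w
  · exact Or.inr h2
  exfalso
  apply h
  simp [PsiM, Matrix.one_apply, h1, h2, Matrix.sub_apply]

-- the three vanishing lemmas
lemma vanish_L (hDir : ∀ i j, Dir i j → i < j) (A S : Finset (Fin m))
    (hS : S.card = A.card) (hno : ¬ SysEx Dir S A) :
    subdet (((LamMix m Dir)⁻¹)ᵀ) A S = 0 := by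
  rw [subdet, dif_pos hS.symm]
  rw [← Matrix.transpose_submatrix, Matrix.det_transpose]
  have hSc : Sᶜ.card = m - A.card := by
    rw [Finset.card_compl, hS]; simp
  have hAc : Aᶜ.card = m - A.card := by
    rw [Finset.card_compl]; simp
  obtain ⟨u, hu, hju⟩ := jacobi_minor (LamMix m Dir) (lam_unit Dir hDir) S A hS rfl hSc hAc
  have hvan := det_compl_vanish Dir (LamMix m Dir) (lam_entry Dir) S A hAc hSc hno
  rw [hvan] at hju
  exact (IsUnit.mul_right_eq_zero hu).mp hju

lemma vanish_R (hDir : ∀ i j, Dir i j → i < j) (T B : Finset (Fin m))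
    (hTB : T.card = B.card) (hno : ¬ SysEx Dir T B) :
    subdet ((LamMix m Dir)⁻¹) T B = 0 := by
  rw [subdet, dif_pos hTB]
  have hTc : Tᶜ.card = m - T.card := by rw [Finset.card_compl]; simp
  have hBc : Bᶜ.card = m - T.card := by rw [Finset.card_compl, hTB]; simp
  obtain ⟨u, hu, hju⟩ := jacobi_minor (LamMix m Dir) (lam_unit Dir hDir) T B rfl hTB.symm hTc hBc
  have hvan := det_compl_vanish Dir (LamMix m Dir) (lam_entry Dir) T B hBc hTc hno
  rw [hvan] at hju
  exact (IsUnit.mul_right_eq_zero hu).mp hju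

lemma vanish_M (S T : Finset (Fin m)) (hST : S.card = T.card) (hno : ¬ SysEx Und S T) :
    subdet (KinvMix m Und) S T = 0 := by
  rw [subdet, dif_pos hST]
  set Psi := PsiM m Und with hPsi
  set dD : Fin m → MixRing m := fun i => MvPowerSeries.X (Sum.inr (Sum.inr i)) with hdD
  set embS := fun i : Fin S.card => ((S.orderIsoOfFin rfl) i).1 with hembS
  set embT := fun i : Fin S.card => ((T.orderIsoOfFin hST.symm) i).1 with hembT
  have hsub : (KinvMix m Und).submatrix embS embT
      = Matrix.diagonal (fun i => dD (embS i)) * ((Psi⁻¹).submatrix embS embT)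
        * Matrix.diagonal (fun i => dD (embT i)) := by
    ext a b
    rw [Matrix.mul_diagonal, Matrix.diagonal_mul, Matrix.submatrix_apply, kinv_eq,
      Matrix.mul_diagonal, Matrix.diagonal_mul, Matrix.submatrix_apply]
  rw [hsub, Matrix.det_mul, Matrix.det_mul, Matrix.det_diagonal, Matrix.det_diagonal]
  have hTc : Tᶜ.card = m - S.card := by rw [Finset.card_compl, hST]; simp
  have hSc : Sᶜ.card = m - S.card := by rw [Finset.card_compl]; simp
  obtain ⟨u, hu, hju⟩ := jacobi_minor Psi (psi_unit Und) S T rfl hST.symm hSc hTc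
  have hvan := det_compl_vanish Und Psi (psi_entry Und) S T hTc hSc hno
  rw [hvan] at hju
  have : (Psi⁻¹.submatrix embS embT).det = 0 := (IsUnit.mul_right_eq_zero hu).mp hju
  rw [this]
  ring

end Main

lemma subdet_eq {m k : ℕ} {R : Type*} [CommRing R] (M : Matrix (Fin m) (Fin m) R)
    (X Y : Finset (Fin m)) (hX : X.card = k) (hY : Y.card = k) :
    subdet M X Y = (M.submatrix (fun i : Fin k => ((X.orderIsoOfFin hX) i).1)
      (fun i : Fin k => ((Y.orderIsoOfFin hY) i).1)).det := by
  subst hX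
  rw [subdet, dif_pos hY.symm]

/-- **Sided crossings force vanishing minors in mixed graphs.** For a mixed graph
with directed edges `Dir` and undirected edges `Und`, generic `Λ` and `K`, and
`Σ = Λ⁻ᵀ K⁻¹ Λ⁻¹`: if every system of `r = #A = #B` treks from `A` to `B` has a
sided crossing, then for all `S`, `T` with `#S = #T = r` the product
`det(Λ⁻ᵀ)_{A,S} ⋅ det(K⁻¹)_{S,T} ⋅ det(Λ⁻¹)_{T,B}` is identically zero, and
consequently `det Σ_{A,B} = 0`. -/
theorem stmt19 (m : ℕ) (Dir Und : Fin m → Fin m → Prop)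
    [DecidableRel Dir] [DecidableRel Und]
    (hDir : ∀ i j : Fin m, Dir i j → i < j)
    (hUndSym : ∀ i j : Fin m, Und i j → Und j i)
    (A B : Finset (Fin m)) (hAB : A.card = B.card)
    (hcross : ∀ (τ : Equiv.Perm (Fin A.card))
        (PL PM PR : Fin A.card → List (Fin m)) (sL sR : Fin A.card → Fin m),
        (∀ i, IsPath Dir (PL i) (sL i) ((A.orderIsoOfFin rfl) i).1
          ∧ IsPath Und (PM i) (sL i) (sR i)
          ∧ IsPath Dir (PR i) (sR i) ((B.orderIsoOfFin hAB.symm) (τ i)).1) →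
        (∃ i j, i ≠ j ∧ ∃ v, v ∈ PL i ∧ v ∈ PL j)
          ∨ (∃ i j, i ≠ j ∧ ∃ v, v ∈ PM i ∧ v ∈ PM j)
          ∨ (∃ i j, i ≠ j ∧ ∃ v, v ∈ PR i ∧ v ∈ PR j)) :
    (∀ S T : Finset (Fin m), S.card = A.card → T.card = A.card →
      subdet (((LamMix m Dir)⁻¹)ᵀ) A S * subdet (KinvMix m Und) S T
        * subdet ((LamMix m Dir)⁻¹) T B = 0)
    ∧ subdet (((LamMix m Dir)⁻¹)ᵀ * KinvMix m Und * (LamMix m Dir)⁻¹) A B = 0 := by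
  classical
  -- Step 1 : if disjoint systems exist on all three sides, contradiction with `hcross`.
  have hglue : ∀ S T : Finset (Fin m), S.card = A.card → T.card = A.card →
      SysEx Dir S A → SysEx Und S T → SysEx Dir T B → False := by
    intro S T hS hT hL hM hR
    obtain ⟨PL', eL, hL1, hL2⟩ := hL
    obtain ⟨PM', eM, hM1, hM2⟩ := hM
    obtain ⟨PR', eR, hR1, hR2⟩ := hR
    have heLinj : ∀ s ∈ S, ∀ t ∈ S, eL s = eL t → s = t := by
      intro s hs t ht hst
      by_contra hne
      have h1 : eL s ∈ PL' s := list_mem_of_getLast? (hL1 s hs).1.2.1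
      have h2 : eL t ∈ PL' t := list_mem_of_getLast? (hL1 t ht).1.2.1
      exact hL2 s hs t ht hne (eL s) h1 (hst ▸ h2)
    have heMinj : ∀ s ∈ S, ∀ t ∈ S, eM s = eM t → s = t := by
      intro s hs t ht hst
      by_contra hne
      have h1 : eM s ∈ PM' s := list_mem_of_getLast? (hM1 s hs).1.2.1
      have h2 : eM t ∈ PM' t := list_mem_of_getLast? (hM1 t ht).1.2.1
      exact hM2 s hs t ht hne (eM s) h1 (hst ▸ h2)
    have heRinj : ∀ s ∈ T, ∀ t ∈ T, eR s = eR t → s = t := by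
      intro s hs t ht hst
      by_contra hne
      have h1 : eR s ∈ PR' s := list_mem_of_getLast? (hR1 s hs).1.2.1
      have h2 : eR t ∈ PR' t := list_mem_of_getLast? (hR1 t ht).1.2.1
      exact hR2 s hs t ht hne (eR s) h1 (hst ▸ h2)
    have hsurjL := Finset.surj_on_of_inj_on_of_card_le (fun a (_ : a ∈ S) => eL a)
      (fun a ha => (hL1 a ha).2) (fun a₁ a₂ h₁ h₂ h => heLinj a₁ h₁ a₂ h₂ h)
      (le_of_eq hS.symm)
    have hchoice : ∀ i : Fin A.card, ∃ s, s ∈ S ∧ eL s = ((A.orderIsoOfFin rfl) i).1 := by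
      intro i
      obtain ⟨a, ha, hea⟩ := hsurjL ((A.orderIsoOfFin rfl) i).1 ((A.orderIsoOfFin rfl) i).2
      exact ⟨a, ha, hea.symm⟩
    choose sF hsF1 hsF2 using hchoice
    have hsFinj : Function.Injective sF := by
      intro i j h
      have h1 : ((A.orderIsoOfFin rfl) i).1 = ((A.orderIsoOfFin rfl) j).1 := by
        rw [← hsF2 i, ← hsF2 j, h]
      exact (A.orderIsoOfFin rfl).injective (Subtype.val_injective h1)
    set tF : Fin A.card → Fin m := fun i => eM (sF i) with htF
    have htF1 : ∀ i, tF i ∈ T := fun i => (hM1 (sF i) (hsF1 i)).2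
    have htFinj : Function.Injective tF := fun i j h =>
      hsFinj (heMinj _ (hsF1 i) _ (hsF1 j) h)
    have hbF : ∀ i, eR (tF i) ∈ B := fun i => (hR1 (tF i) (htF1 i)).2
    set g : Fin A.card → Fin A.card :=
      fun i => (B.orderIsoOfFin hAB.symm).symm ⟨eR (tF i), hbF i⟩ with hg
    have hginj : Function.Injective g := by
      intro i j h
      apply htFinj
      apply heRinj _ (htF1 i) _ (htF1 j)
      have := (B.orderIsoOfFin hAB.symm).symm.injective h
      exact congrArg Subtype.val this
    set τ : Equiv.Perm (Fin A.card) :=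
      Equiv.ofBijective g (Finite.injective_iff_bijective.mp hginj) with hτ
    have hpaths : ∀ i, IsPath Dir (PL' (sF i)) (sF i) ((A.orderIsoOfFin rfl) i).1
        ∧ IsPath Und (PM' (sF i)) (sF i) (tF i)
        ∧ IsPath Dir (PR' (tF i)) (tF i) ((B.orderIsoOfFin hAB.symm) (τ i)).1 := by
      intro i
      refine ⟨?_, ?_, ?_⟩
      · rw [← hsF2 i]
        exact (hL1 _ (hsF1 i)).1
      · exact (hM1 _ (hsF1 i)).1
      · have hτi : ((B.orderIsoOfFin hAB.symm) (τ i)).1 = eR (tF i) := by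
          have : τ i = g i := rfl
          rw [this, hg]
          simp
        rw [hτi]
        exact (hR1 _ (htF1 i)).1
    rcases hcross τ (fun i => PL' (sF i)) (fun i => PM' (sF i)) (fun i => PR' (tF i))
        sF tF hpaths with ⟨i, j, hij, v, hvi, hvj⟩ | ⟨i, j, hij, v, hvi, hvj⟩ |
          ⟨i, j, hij, v, hvi, hvj⟩
    · exact hL2 _ (hsF1 i) _ (hsF1 j) (fun h => hij (hsFinj h)) v hvi hvj
    · exact hM2 _ (hsF1 i) _ (hsF1 j) (fun h => hij (hsFinj h)) v hvi hvj
    · exact hR2 _ (htF1 i) _ (htF1 j) (fun h => hij (htFinj h)) v hvi hvj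
  -- Step 2 : part 1 of the statement
  have part1 : ∀ S T : Finset (Fin m), S.card = A.card → T.card = A.card →
      subdet (((LamMix m Dir)⁻¹)ᵀ) A S * subdet (KinvMix m Und) S T
        * subdet ((LamMix m Dir)⁻¹) T B = 0 := by
    intro S T hS hT
    by_cases hL : SysEx Dir S A
    · by_cases hM : SysEx Und S T
      · by_cases hR : SysEx Dir T B
        · exact (hglue S T hS hT hL hM hR).elim
        · rw [vanish_R Dir hDir T B (by rw [hT, hAB]) hR, mul_zero]
      · rw [vanish_M Und S T (by rw [hS, hT]) hM, mul_zero, zero_mul]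
    · rw [vanish_L Dir hDir A S hS hL, zero_mul, zero_mul]
  refine ⟨part1, ?_⟩
  -- Step 3 : Cauchy–Binet
  rw [subdet, dif_pos hAB]
  set embA := fun i : Fin A.card => ((A.orderIsoOfFin rfl) i).1 with hembA
  set embB := fun i : Fin A.card => ((B.orderIsoOfFin hAB.symm) i).1 with hembB
  have hsplit : ((((LamMix m Dir)⁻¹)ᵀ * KinvMix m Und * (LamMix m Dir)⁻¹).submatrix embA embB)
      = ((((LamMix m Dir)⁻¹)ᵀ).submatrix embA id)
        * ((KinvMix m Und * (LamMix m Dir)⁻¹).submatrix id embB) := by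
    rw [Matrix.mul_assoc]
    ext a b
    simp [Matrix.mul_apply, Matrix.submatrix_apply]
  rw [hsplit, cauchy_binet]
  apply Finset.sum_eq_zero
  intro S hSmem
  have hScard : S.1.card = A.card := Finset.mem_powersetCard_univ.mp S.2
  have h2 : ((KinvMix m Und * (LamMix m Dir)⁻¹).submatrix id embB).submatrix
      (fun i : Fin A.card => ((S.1.orderIsoOfFin (Finset.mem_powersetCard_univ.mp S.2)) i).1) id
      = ((KinvMix m Und).submatrix
          (fun i : Fin A.card => ((S.1.orderIsoOfFin (Finset.mem_powersetCard_univ.mp S.2)) i).1) id)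
        * (((LamMix m Dir)⁻¹).submatrix id embB) := by
    ext a b
    simp [Matrix.mul_apply, Matrix.submatrix_apply]
  rw [h2, cauchy_binet, Finset.mul_sum]
  apply Finset.sum_eq_zero
  intro T hTmem
  have hTcard : T.1.card = A.card := Finset.mem_powersetCard_univ.mp T.2
  have hBcard : B.card = A.card := hAB.symm
  have key := part1 S.1 T.1 hScard hTcard
  rw [subdet_eq _ _ _ rfl hScard, subdet_eq _ _ _ hScard hTcard,
    subdet_eq _ _ _ hTcard hBcard] at key
  simp only [Matrix.submatrix_submatrix, Function.comp_id, Function.id_comp] at key ⊢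
  linear_combination key
end
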